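/- arXiv:1610.05928 — 4 statements merged into one kernel-verified Lean document; each statement's English description precedes it below -/
import Mathlib

section
/- Let $\{\lambda_n\}$ be a strictly increasing sequence of positive reals tending to infinity, and $\{r_n\}$ complex numbers such that $\sum_{T\leq \lambda_n\leq T+1}|r_n| \ll T^{-\beta}$ for $T\gg 1$, with $0<\beta\leq 1$. Let $0<\alpha\leq 1$, $a\geq 0$, and $B\geq 2$. Then for all $\mu>0$ one has $\sum_{0<\lambda_n<\mu} |r_n|\frac{\log^a(\mu-\lambda_n+2B)}{(\mu-\lambda_n+B+1)^\alpha} \ll \frac{\log^{a+1}(\mu+2B)}{(\mu+B+1)^{\alpha+\beta-1}}$, with implied constant independent of $\mu$. -/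
open Filter Topology

private lemma auxHarm : ∀ N : ℕ, ∑ i ∈ Finset.range N, (1:ℝ)/((i:ℝ)+2) ≤ Real.log ((N:ℝ)+1) := by
  intro N
  induction N with
  | zero => simp
  | succ N ih =>
    rw [Finset.sum_range_succ]
    have h1 : (1:ℝ)/((N:ℝ)+2) ≤ Real.log ((N:ℝ)+2) - Real.log ((N:ℝ)+1) := by
      have key := Real.log_le_sub_one_of_pos (x := ((N:ℝ)+1)/((N:ℝ)+2)) (by positivity)
      rw [Real.log_div (by positivity) (by positivity)] at key
      have h2 : ((N:ℝ)+1)/((N:ℝ)+2) - 1 = -(1/((N:ℝ)+2)) := by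
        field_simp
        norm_num
      rw [h2] at key
      linarith
    have h3 : ((N:ℝ)+1) + 1 = (N:ℝ)+2 := by ring
    push_cast
    rw [h3]
    linarith

private lemma auxPt (θ τ P x y : ℝ) (hθ : 0 < θ) (hθ1 : θ ≤ 1) (hτ : 0 < τ) (hτ1 : τ ≤ 1)
    (hx : 0 < x) (hxP : x ≤ P) (hy : 0 < y) (hPy : P ≤ 4*y) :
    1/(x^θ * y^τ) ≤ 4 * P^(1-τ-θ) * (1/x) := by
  have hP : 0 < P := lt_of_lt_of_le hx hxP
  rw [mul_one_div, div_le_div_iff₀ (by positivity) hx]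
  have e1 : x^θ * x^(1-θ) = x := by
    rw [← Real.rpow_add hx, show θ+(1-θ) = 1 by ring, Real.rpow_one]
  have e2 : x^(1-θ) ≤ P^(1-θ) := Real.rpow_le_rpow hx.le hxP (by linarith)
  have e3 : P^(1-θ) = P^(1-τ-θ) * P^τ := by
    rw [← Real.rpow_add hP, show 1-τ-θ+τ = 1-θ by ring]
  have e4 : P^τ ≤ 4 * y^τ := by
    calc P^τ ≤ (4*y)^τ := Real.rpow_le_rpow hP.le hPy hτ.le
      _ = 4^τ * y^τ := Real.mul_rpow (by norm_num) hy.le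
      _ ≤ 4 * y^τ := by
          have h4 : (4:ℝ)^τ ≤ 4 := by
            calc (4:ℝ)^τ ≤ (4:ℝ)^(1:ℝ) := Real.rpow_le_rpow_of_exponent_le (by norm_num) hτ1
              _ = 4 := Real.rpow_one 4
          exact mul_le_mul_of_nonneg_right h4 (Real.rpow_nonneg hy.le τ)
  calc 1 * x = x^θ * x^(1-θ) := by rw [one_mul, e1]
    _ ≤ x^θ * P^(1-θ) := mul_le_mul_of_nonneg_left e2 (Real.rpow_nonneg hx.le θ)
    _ = x^θ * (P^(1-τ-θ) * P^τ) := by rw [e3]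
    _ ≤ x^θ * (P^(1-τ-θ) * (4*y^τ)) := by
        refine mul_le_mul_of_nonneg_left ?_ (Real.rpow_nonneg hx.le θ)
        exact mul_le_mul_of_nonneg_left e4 (Real.rpow_nonneg hP.le _)
    _ = 4 * P^(1-τ-θ) * (x^θ * y^τ) := by ring

private lemma auxPt2 (α β P x y : ℝ) (hα : 0 < α) (hα1 : α ≤ 1) (hβ : 0 < β) (hβ1 : β ≤ 1)
    (hx : 1 ≤ x) (hxP : x ≤ P) (hy : 1 ≤ y) (hyP : y ≤ P) (hxy : P ≤ 2*(x+y)) :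
    1/(x^β * y^α) ≤ 4 * P^(1-α-β) * (1/x + 1/y) := by
  have hx0 : 0 < x := lt_of_lt_of_le one_pos hx
  have hy0 : 0 < y := lt_of_lt_of_le one_pos hy
  have hP : 0 < P := lt_of_lt_of_le hx0 hxP
  have hE : 0 ≤ 4 * P^(1-α-β) := by positivity
  rcases le_or_gt P (4*y) with h | h
  · calc 1/(x^β*y^α) ≤ 4*P^(1-α-β)*(1/x) := auxPt β α P x y hβ hβ1 hα hα1 hx0 hxP hy0 h
      _ ≤ 4*P^(1-α-β)*(1/x+1/y) := by
          refine mul_le_mul_of_nonneg_left ?_ hE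
          have : 0 ≤ 1/y := by positivity
          linarith
  · have h' : P ≤ 4*x := by linarith
    have key := auxPt α β P y x hα hα1 hβ hβ1 hy0 hyP hx0 h'
    calc 1/(x^β*y^α) = 1/(y^α*x^β) := by rw [mul_comm]
      _ ≤ 4*P^(1-β-α)*(1/y) := key
      _ = 4*P^(1-α-β)*(1/y) := by rw [show (1-β-α) = 1-α-β by ring]
      _ ≤ 4*P^(1-α-β)*(1/x+1/y) := by
          refine mul_le_mul_of_nonneg_left ?_ hE
          have : 0 ≤ 1/x := by positivity
          linarith

/-- Lemma 2.1: unit-interval coefficient sums, bound for the "difference" kernel. -/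
theorem stmt0
    (lam : ℕ → ℝ) (r : ℕ → ℂ) (β a B α : ℝ)
    (hmono : StrictMono lam) (hpos : ∀ n, 0 < lam n)
    (hlim : Tendsto lam atTop atTop)
    (hβ : 0 < β) (hβ1 : β ≤ 1)
    (hcoef : ∃ C T₀ : ℝ, 0 < C ∧ 1 ≤ T₀ ∧ ∀ T ≥ T₀,
      (∑' n, if T ≤ lam n ∧ lam n ≤ T + 1 then ‖r n‖ else 0) ≤ C / T ^ β)
    (hα : 0 < α) (hα1 : α ≤ 1) (ha : 0 ≤ a) (hB : 2 ≤ B) :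
    ∃ C : ℝ, 0 < C ∧ ∀ μ > (0:ℝ),
      (∑' n, if lam n < μ then
          ‖r n‖ * Real.log (μ - lam n + 2 * B) ^ a
            / (μ - lam n + B + 1) ^ α else 0)
        ≤ C * Real.log (μ + 2 * B) ^ (a + 1) / (μ + B + 1) ^ (α + β - 1) := by
  obtain ⟨C, T₀, hC, hT₀, hcoef⟩ := hcoef
  have hfin : ∀ X : ℝ, {n : ℕ | lam n ≤ X}.Finite := by
    intro X
    obtain ⟨N, hN⟩ := Filter.eventually_atTop.mp (hlim.eventually_gt_atTop X)
    apply Set.Finite.subset (Set.finite_Iio N)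
    intro n hn
    simp only [Set.mem_setOf_eq] at hn
    by_contra hcon
    exact absurd hn (not_le.mpr (hN n (not_lt.mp (fun h => hcon h))))
  set K := ∑ n ∈ (hfin (T₀+1)).toFinset, ‖r n‖ with hKdef
  have hK0 : 0 ≤ K := Finset.sum_nonneg fun n _ => norm_nonneg _
  have hT₀β : (1:ℝ) ≤ T₀ ^ β := Real.one_le_rpow hT₀ hβ.le
  set D := (C + K) * T₀ ^ β with hDdef
  have hD : 0 < D := mul_pos (by linarith) (lt_of_lt_of_le one_pos hT₀β)
  -- coefficient bound over unit intervals
  have hS : ∀ (j : ℕ) (s : Finset ℕ), (∀ n ∈ s, (j:ℝ) ≤ lam n ∧ lam n < (j:ℝ)+1) →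
      ∑ n ∈ s, ‖r n‖ ≤ D / (max 1 (j:ℝ)) ^ β := by
    intro j s hs
    have hmax1 : (1:ℝ) ≤ max 1 (j:ℝ) := le_max_left _ _
    have hmaxpos : (0:ℝ) < max 1 (j:ℝ) := lt_of_lt_of_le one_pos hmax1
    have hmaxβpos : (0:ℝ) < (max 1 (j:ℝ)) ^ β := Real.rpow_pos_of_pos hmaxpos β
    rcases le_or_gt T₀ (j:ℝ) with h | h
    · have hj1 : (1:ℝ) ≤ (j:ℝ) := le_trans hT₀ h
      have hmax : max 1 (j:ℝ) = (j:ℝ) := max_eq_right hj1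
      have hgsum : Summable (fun n => if (j:ℝ) ≤ lam n ∧ lam n ≤ (j:ℝ)+1 then ‖r n‖ else 0) := by
        apply summable_of_ne_finset_zero (s := (hfin ((j:ℝ)+1)).toFinset)
        intro n hn
        rw [Set.Finite.mem_toFinset] at hn
        simp only [Set.mem_setOf_eq] at hn
        exact if_neg (fun hcond => hn hcond.2)
      have h1 : ∑ n ∈ s, ‖r n‖
          = ∑ n ∈ s, (if (j:ℝ) ≤ lam n ∧ lam n ≤ (j:ℝ)+1 then ‖r n‖ else 0) := by
        apply Finset.sum_congr rfl
        intro n hn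
        obtain ⟨ha1, ha2⟩ := hs n hn
        exact (if_pos ⟨ha1, ha2.le⟩).symm
      have h2 := Summable.sum_le_tsum s (fun n _ => by positivity) hgsum
      have h3 := hcoef (j:ℝ) h
      rw [hmax]
      have hCD : C ≤ D := by
        have t1 : 0 ≤ K * T₀^β := mul_nonneg hK0 (by linarith)
        nlinarith
      calc ∑ n ∈ s, ‖r n‖ ≤ C / (j:ℝ)^β := by rw [h1]; exact le_trans h2 h3
        _ ≤ D / (j:ℝ)^β := by
            have : (0:ℝ) < (j:ℝ)^β := Real.rpow_pos_of_pos (by linarith) β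
            exact div_le_div_of_nonneg_right hCD this.le
    · have hsub : s ⊆ (hfin (T₀+1)).toFinset := by
        intro n hn
        rw [Set.Finite.mem_toFinset]
        obtain ⟨_, ha2⟩ := hs n hn
        simp only [Set.mem_setOf_eq]
        linarith
      have h1 : ∑ n ∈ s, ‖r n‖ ≤ K :=
        Finset.sum_le_sum_of_subset_of_nonneg hsub (fun n _ _ => norm_nonneg _)
      have h2 : (max 1 (j:ℝ))^β ≤ T₀^β :=
        Real.rpow_le_rpow hmaxpos.le (max_le hT₀ h.le) hβ.le
      have h3 : K * (max 1 (j:ℝ))^β ≤ D := by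
        have t1 : 0 ≤ C * T₀^β := mul_nonneg hC.le (by linarith)
        have t2 : K * (max 1 (j:ℝ))^β ≤ K * T₀^β := mul_le_mul_of_nonneg_left h2 hK0
        rw [hDdef]; linarith
      rw [le_div_iff₀ hmaxβpos]
      calc (∑ n ∈ s, ‖r n‖) * (max 1 (j:ℝ))^β
          ≤ K * (max 1 (j:ℝ))^β := mul_le_mul_of_nonneg_right h1 hmaxβpos.le
        _ ≤ D := h3
  refine ⟨20 * D, by positivity, ?_⟩
  intro μ hμ
  set L := Real.log (μ + 2*B) with hLdef
  set P := μ + B + 1 with hPdef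
  have hP0 : (0:ℝ) < P := by rw [hPdef]; linarith
  have hL1 : (1:ℝ) ≤ L := by
    rw [hLdef, Real.le_log_iff_exp_le (by linarith)]
    have := Real.exp_one_lt_d9
    linarith
  have hL0 : (0:ℝ) ≤ L := by linarith
  have hLa0 : (0:ℝ) ≤ L ^ a := Real.rpow_nonneg hL0 a
  set M := Nat.floor μ with hMdef
  have hMμ : (M:ℝ) ≤ μ := Nat.floor_le hμ.le
  have hfinlt : {n : ℕ | lam n < μ}.Finite := by
    apply Set.Finite.subset (hfin μ)
    intro n hn
    simp only [Set.mem_setOf_eq] at hn ⊢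
    exact hn.le
  set F := hfinlt.toFinset with hFdef
  have h0 : ∀ n ∉ F, (if lam n < μ then
      ‖r n‖ * Real.log (μ - lam n + 2 * B) ^ a
        / (μ - lam n + B + 1) ^ α else 0) = 0 := by
    intro n hn
    refine if_neg (fun h => hn ?_)
    rw [hFdef, Set.Finite.mem_toFinset]
    exact h
  have hmaps : ∀ n ∈ F, Nat.floor (lam n) ∈ Finset.range (M+1) := by
    intro n hn
    rw [hFdef, Set.Finite.mem_toFinset] at hn
    rw [Finset.mem_range, Nat.lt_succ_iff]
    exact Nat.floor_le_floor (le_of_lt hn)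
  rw [tsum_eq_sum h0, ← Finset.sum_fiberwise_of_maps_to hmaps]
  -- rewrite the RHS
  rw [div_eq_mul_inv, ← Real.rpow_neg hP0.le, show -(α+β-1) = 1-α-β by ring]
  have hE0 : (0:ℝ) ≤ P^(1-α-β) := Real.rpow_nonneg hP0.le _
  -- inner fiber bound
  have inner : ∀ j ∈ Finset.range (M+1),
      (∑ n ∈ F.filter (fun n => Nat.floor (lam n) = j), (if lam n < μ then
        ‖r n‖ * Real.log (μ - lam n + 2 * B) ^ a
          / (μ - lam n + B + 1) ^ α else 0))
      ≤ (D * L^a * (4 * P^(1-α-β))) * (1/(max 1 (j:ℝ)) + 1/(μ-(j:ℝ)+B)) := by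
    intro j hj
    rw [Finset.mem_range, Nat.lt_succ_iff] at hj
    have hjμ : (j:ℝ) ≤ μ := le_trans (by exact_mod_cast Nat.cast_le.mpr hj) hMμ
    have hyB : (2:ℝ) ≤ μ - (j:ℝ) + B := by linarith
    have hy0 : (0:ℝ) < μ - (j:ℝ) + B := by linarith
    have hyα : (0:ℝ) < (μ - (j:ℝ) + B)^α := Real.rpow_pos_of_pos hy0 α
    have hmax1 : (1:ℝ) ≤ max 1 (j:ℝ) := le_max_left _ _
    have hmaxpos : (0:ℝ) < max 1 (j:ℝ) := lt_of_lt_of_le one_pos hmax1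
    have hmaxβpos : (0:ℝ) < (max 1 (j:ℝ)) ^ β := Real.rpow_pos_of_pos hmaxpos β
    have hfiber : ∀ n ∈ F.filter (fun n => Nat.floor (lam n) = j),
        (j:ℝ) ≤ lam n ∧ lam n < (j:ℝ)+1 := by
      intro n hn
      rw [Finset.mem_filter] at hn
      obtain ⟨_, hnj⟩ := hn
      constructor
      · rw [← hnj]; exact Nat.floor_le (hpos n).le
      · rw [← hnj]; exact Nat.lt_floor_add_one (lam n)
    have hterm : ∀ n ∈ F.filter (fun n => Nat.floor (lam n) = j),
        (if lam n < μ then ‖r n‖ * Real.log (μ - lam n + 2 * B) ^ a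
            / (μ - lam n + B + 1) ^ α else 0)
        ≤ ‖r n‖ * (L^a / (μ-(j:ℝ)+B)^α) := by
      intro n hn
      have hf := hfiber n hn
      rw [Finset.mem_filter, hFdef, Set.Finite.mem_toFinset] at hn
      obtain ⟨hnμ, _⟩ := hn
      simp only [Set.mem_setOf_eq] at hnμ
      rw [if_pos hnμ]
      have hl0 : 0 < lam n := hpos n
      have hargpos : (0:ℝ) < μ - lam n + 2*B := by linarith
      have hlog : Real.log (μ - lam n + 2*B) ^ a ≤ L ^ a := by
        apply Real.rpow_le_rpow (Real.log_nonneg (by linarith)) _ ha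
        exact Real.log_le_log hargpos (by linarith)
      have hlognn : (0:ℝ) ≤ Real.log (μ - lam n + 2*B) ^ a :=
        Real.rpow_nonneg (Real.log_nonneg (by linarith)) a
      have hdpos : (0:ℝ) < μ - lam n + B + 1 := by linarith
      have hdenα : (0:ℝ) < (μ - lam n + B + 1)^α := Real.rpow_pos_of_pos hdpos α
      have hden : (μ - (j:ℝ) + B)^α ≤ (μ - lam n + B + 1)^α :=
        Real.rpow_le_rpow hy0.le (by linarith [hf.2]) hα.le
      calc ‖r n‖ * Real.log (μ - lam n + 2*B) ^ a / (μ - lam n + B + 1) ^ α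
          ≤ ‖r n‖ * L^a / (μ - lam n + B + 1) ^ α := by
            exact div_le_div_of_nonneg_right
              (mul_le_mul_of_nonneg_left hlog (norm_nonneg _)) hdenα.le
        _ ≤ ‖r n‖ * L^a / (μ - (j:ℝ) + B) ^ α := by
            apply div_le_div_of_nonneg_left _ hyα hden
            exact mul_nonneg (norm_nonneg _) hLa0
        _ = ‖r n‖ * (L^a / (μ-(j:ℝ)+B)^α) := by rw [mul_div_assoc]
    have hx1 : (1:ℝ) ≤ max 1 (j:ℝ) := hmax1
    have hxP : max 1 (j:ℝ) ≤ P := max_le (by rw [hPdef]; linarith) (by rw [hPdef]; linarith)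
    have hy1 : (1:ℝ) ≤ μ - (j:ℝ) + B := by linarith
    have hyP : μ - (j:ℝ) + B ≤ P := by rw [hPdef]; have : (0:ℝ) ≤ (j:ℝ) := Nat.cast_nonneg j; linarith
    have hsum : P ≤ 2*((max 1 (j:ℝ)) + (μ - (j:ℝ) + B)) := by
      have h1 : (j:ℝ) ≤ max 1 (j:ℝ) := le_max_right _ _
      rw [hPdef]; linarith
    have hpt := auxPt2 α β P (max 1 (j:ℝ)) (μ-(j:ℝ)+B) hα hα1 hβ hβ1 hx1 hxP hy1 hyP hsum
    calc (∑ n ∈ F.filter (fun n => Nat.floor (lam n) = j), (if lam n < μ then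
          ‖r n‖ * Real.log (μ - lam n + 2 * B) ^ a
            / (μ - lam n + B + 1) ^ α else 0))
        ≤ ∑ n ∈ F.filter (fun n => Nat.floor (lam n) = j),
            ‖r n‖ * (L^a / (μ-(j:ℝ)+B)^α) := Finset.sum_le_sum hterm
      _ = (∑ n ∈ F.filter (fun n => Nat.floor (lam n) = j), ‖r n‖)
            * (L^a / (μ-(j:ℝ)+B)^α) := by rw [Finset.sum_mul]
      _ ≤ (D / (max 1 (j:ℝ))^β) * (L^a / (μ-(j:ℝ)+B)^α) := by
          apply mul_le_mul_of_nonneg_right (hS j _ hfiber) (by positivity)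
      _ = D * L^a * (1/((max 1 (j:ℝ))^β * (μ-(j:ℝ)+B)^α)) := by
          rw [div_mul_div_comm, mul_one_div]
      _ ≤ D * L^a * (4 * P^(1-α-β) * (1/(max 1 (j:ℝ)) + 1/(μ-(j:ℝ)+B))) := by
          exact mul_le_mul_of_nonneg_left hpt (mul_nonneg hD.le hLa0)
      _ = (D * L^a * (4 * P^(1-α-β))) * (1/(max 1 (j:ℝ)) + 1/(μ-(j:ℝ)+B)) := by ring
  -- sum the harmonic-type bounds
  have hsum1 : ∑ j ∈ Finset.range (M+1), 1/(max 1 (j:ℝ)) ≤ 3 * Real.log ((M:ℝ)+2) := by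
    have hterm : ∀ j ∈ Finset.range (M+1), 1/(max 1 (j:ℝ)) ≤ 3 * (1/((j:ℝ)+2)) := by
      intro j _
      rcases Nat.eq_zero_or_pos j with hj | hj
      · subst hj; norm_num
      · have hj1 : (1:ℝ) ≤ (j:ℝ) := by exact_mod_cast hj
        rw [max_eq_right hj1, mul_one_div, div_le_div_iff₀ (by linarith) (by linarith)]
        linarith
    calc ∑ j ∈ Finset.range (M+1), 1/(max 1 (j:ℝ))
        ≤ ∑ j ∈ Finset.range (M+1), 3 * (1/((j:ℝ)+2)) := Finset.sum_le_sum hterm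
      _ = 3 * ∑ j ∈ Finset.range (M+1), (1:ℝ)/((j:ℝ)+2) := by rw [Finset.mul_sum]
      _ ≤ 3 * Real.log ((M:ℝ)+2) := by
          have := auxHarm (M+1)
          push_cast at this
          have h2 : ((M:ℝ)+1+1) = (M:ℝ)+2 := by ring
          rw [h2] at this
          linarith
  have hsum2 : ∑ j ∈ Finset.range (M+1), 1/(μ-(j:ℝ)+B) ≤ Real.log ((M:ℝ)+2) := by
    have hterm : ∀ j ∈ Finset.range (M+1), 1/(μ-(j:ℝ)+B) ≤ 1/(((M-j:ℕ):ℝ)+2) := by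
      intro j hj
      rw [Finset.mem_range, Nat.lt_succ_iff] at hj
      have hcast : ((M-j:ℕ):ℝ) = (M:ℝ) - (j:ℝ) := by
        rw [Nat.cast_sub hj]
      rw [hcast]
      have hjM : (j:ℝ) ≤ (M:ℝ) := Nat.cast_le.mpr hj
      apply one_div_le_one_div_of_le (by linarith) (by linarith)
    have hreflect : ∑ j ∈ Finset.range (M+1), (1:ℝ)/(((M-j:ℕ):ℝ)+2)
        = ∑ k ∈ Finset.range (M+1), (1:ℝ)/((k:ℝ)+2) := by
      have := Finset.sum_range_reflect (fun k => (1:ℝ)/((k:ℝ)+2)) (M+1)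
      simpa using this
    calc ∑ j ∈ Finset.range (M+1), 1/(μ-(j:ℝ)+B)
        ≤ ∑ j ∈ Finset.range (M+1), (1:ℝ)/(((M-j:ℕ):ℝ)+2) := Finset.sum_le_sum hterm
      _ = ∑ k ∈ Finset.range (M+1), (1:ℝ)/((k:ℝ)+2) := hreflect
      _ ≤ Real.log ((M:ℝ)+2) := by
          have := auxHarm (M+1)
          push_cast at this
          have h2 : ((M:ℝ)+1+1) = (M:ℝ)+2 := by ring
          rw [h2] at this
          exact this
  have hlogle : Real.log ((M:ℝ)+2) ≤ L := by
    rw [hLdef]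
    exact Real.log_le_log (by positivity) (by linarith)
  have htot : ∑ j ∈ Finset.range (M+1), (1/(max 1 (j:ℝ)) + 1/(μ-(j:ℝ)+B)) ≤ 4 * L := by
    rw [Finset.sum_add_distrib]
    linarith
  have hb0 : (0:ℝ) ≤ D * L^a * (4 * P^(1-α-β)) := by positivity
  have hfact : L^a * L = L^(a+1) := (Real.rpow_add_one (by linarith : L ≠ 0) a).symm
  calc ∑ j ∈ Finset.range (M+1), (∑ n ∈ F.filter (fun n => Nat.floor (lam n) = j),
        (if lam n < μ then ‖r n‖ * Real.log (μ - lam n + 2 * B) ^ a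
          / (μ - lam n + B + 1) ^ α else 0))
      ≤ ∑ j ∈ Finset.range (M+1),
          (D * L^a * (4 * P^(1-α-β))) * (1/(max 1 (j:ℝ)) + 1/(μ-(j:ℝ)+B)) :=
        Finset.sum_le_sum inner
    _ = (D * L^a * (4 * P^(1-α-β))) * ∑ j ∈ Finset.range (M+1),
          (1/(max 1 (j:ℝ)) + 1/(μ-(j:ℝ)+B)) := by rw [Finset.mul_sum]
    _ ≤ (D * L^a * (4 * P^(1-α-β))) * (4 * L) := mul_le_mul_of_nonneg_left htot hb0
    _ = 16 * D * (L^a * L) * P^(1-α-β) := by ring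
    _ = 16 * D * L^(a+1) * P^(1-α-β) := by rw [hfact]
    _ ≤ 20 * D * L^(a+1) * P^(1-α-β) := by
        have h0 : 0 ≤ D * L^(a+1) * P^(1-α-β) :=
          mul_nonneg (mul_nonneg hD.le (Real.rpow_nonneg hL0 _)) hE0
        linarith
end

section
/- Let $\{\lambda_n\}$ be a strictly increasing sequence of positive reals tending to infinity and $\{r_n\}$ complex numbers with $\sum_{T\leq \lambda_n\leq T+1}|r_n| \ll T^{-\beta}$ for $T\gg 1$, where $\beta>1-1/n$ for some integer $n\geq 2$. For $0\leq s\leq n$ let $\mathcal{O}_s$ be the set of $n$-tuples $(\lambda_{j_1},\ldots,\lambda_{j_n})$ of frequencies with $\lambda_{j_1}+\cdots+\lambda_{j_s}-\lambda_{j_{s+1}}-\cdots-\lambda_{j_n}\neq 0$. Then the sum $\sum_{s=0}^n\sum_{\mathcal{O}_s} \frac{|r_{j_1}\cdots r_{j_n}|}{1+Y|\lambda_{j_1}+\cdots+\lambda_{j_s}-\lambda_{j_{s+1}}-\cdots-\lambda_{j_n}|}$ is uniformly bounded for $Y\geq 1$. -/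
open Filter Topology ENNReal

namespace Stmt2Aux

noncomputable def pw (a : ℝ) (k : ℕ) : ℝ≥0∞ := ENNReal.ofReal (((1:ℝ) + k) ^ (-a))

noncomputable def uu (q : ℝ) (z : ℤ) : ℝ≥0∞ := ENNReal.ofReal ((1 + |(z:ℝ)|) ^ (-q))

lemma summable_pw_real {a : ℝ} (ha : 1 < a) :
    Summable (fun k : ℕ => ((1:ℝ) + k) ^ (-a)) := by
  have h0 : Summable (fun n : ℕ => ((n : ℝ) ^ a)⁻¹) := Real.summable_nat_rpow_inv.2 ha
  have h1 : Summable (fun n : ℕ => ((n : ℝ)) ^ (-a)) := by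
    refine h0.congr fun n => ?_
    rw [Real.rpow_neg (Nat.cast_nonneg n)]
  have h2 := (summable_nat_add_iff 1).2 h1
  refine h2.congr fun n => ?_
  push_cast
  ring_nf

lemma tsum_pw_ne_top {a : ℝ} (ha : 1 < a) : ∑' k : ℕ, pw a k ≠ ⊤ := by
  unfold pw
  rw [← ENNReal.ofReal_tsum_of_nonneg (fun n => Real.rpow_nonneg (by positivity) _)
    (summable_pw_real ha)]
  exact ENNReal.ofReal_ne_top

lemma summable_int_real {a : ℝ} (ha : 1 < a) :
    Summable (fun z : ℤ => (1 + |(z:ℝ)|) ^ (-a)) := by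
  rw [summable_int_iff_summable_nat_and_neg]
  constructor <;>
  · refine (summable_pw_real ha).congr fun n => ?_
    push_cast
    simp [abs_of_nonneg, Nat.cast_nonneg]
lemma tsum_uu_ne_top {a : ℝ} (ha : 1 < a) : ∑' z : ℤ, uu a z ≠ ⊤ := by
  unfold uu
  rw [← ENNReal.ofReal_tsum_of_nonneg (fun z => Real.rpow_nonneg (by positivity) _)
    (summable_int_real ha)]
  exact ENNReal.ofReal_ne_top

lemma uu_shift_le (a : ℝ) (e d : ℤ) (he : e ≠ 0) :
    ∑' k : ℕ, uu a (e * k + d) ≤ ∑' z : ℤ, uu a z := by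
  have hinj : Function.Injective (fun k : ℕ => e * (k:ℤ) + d) := by
    intro k l h
    simp only at h
    have h' : e * (k:ℤ) = e * (l:ℤ) := by omega
    exact_mod_cast mul_left_cancel₀ he h'
  exact ENNReal.tsum_comp_le_tsum_of_injective hinj (uu a)



lemma prod_ite_zero {ι : Type*} [Fintype ι] (P : ι → Prop) [DecidablePred P]
    (x : ι → ℝ≥0∞) :
    (∏ i, if P i then x i else 0) = if (∀ i, P i) then ∏ i, x i else 0 := by
  by_cases h : ∀ i, P i
  · rw [if_pos h]
    exact Finset.prod_congr rfl fun i _ => if_pos (h i)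
  · rw [if_neg h]
    push_neg at h
    obtain ⟨i, hi⟩ := h
    exact Finset.prod_eq_zero (Finset.mem_univ i) (if_neg hi)

lemma pi_tsum_prod_fin : ∀ (m : ℕ) (f : Fin m → ℕ → ℝ≥0∞),
    ∑' g : Fin m → ℕ, ∏ i, f i (g i) = ∏ i, ∑' k : ℕ, f i k := by
  intro m
  induction m with
  | zero =>
    intro f
    rw [Finset.univ_eq_empty, Finset.prod_empty,
      tsum_eq_single (fun (i : Fin 0) => 0) (fun g hg => by
        simpa using absurd (funext fun i : Fin 0 => i.elim0) hg)]
    · simp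
  | succ m ih =>
    intro f
    rw [← ((Fin.consEquiv (fun _ : Fin (m+1) => ℕ))).tsum_eq]
    rw [ENNReal.tsum_prod']
    have : ∀ (a : ℕ) (b : Fin m → ℕ),
        (∏ i, f i ((Fin.consEquiv (fun _ : Fin (m+1) => ℕ)) (a, b) i)) =
          f 0 a * ∏ i : Fin m, f i.succ (b i) := by
      intro a b
      rw [Fin.prod_univ_succ]
      rfl
    calc ∑' (a : ℕ) (b : Fin m → ℕ), (∏ i, f i ((Fin.consEquiv (fun _ : Fin (m+1) => ℕ)) (a, b) i))
        = ∑' (a : ℕ) (b : Fin m → ℕ), f 0 a * ∏ i : Fin m, f i.succ (b i) := by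
          simp only [this]
      _ = ∑' (a : ℕ), f 0 a * ∑' (b : Fin m → ℕ), ∏ i : Fin m, f i.succ (b i) := by
          congr 1; ext a; rw [ENNReal.tsum_mul_left]
      _ = (∑' a : ℕ, f 0 a) * ∑' (b : Fin m → ℕ), ∏ i : Fin m, f i.succ (b i) := by
          rw [ENNReal.tsum_mul_right]
      _ = ∏ i, ∑' k : ℕ, f i k := by
          rw [ih (fun i => f i.succ), Fin.prod_univ_succ]

lemma pi_tsum_prod {ι : Type*} [Fintype ι] (f : ι → ℕ → ℝ≥0∞) :
    ∑' g : ι → ℕ, ∏ i, f i (g i) = ∏ i, ∑' k : ℕ, f i k := by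
  classical
  obtain ⟨m, ⟨e⟩⟩ : ∃ m, Nonempty (ι ≃ Fin m) := ⟨Fintype.card ι, ⟨Fintype.equivFin ι⟩⟩
  have hG : ∀ g : ι → ℕ, (∏ i, f i (g i)) = ∏ j : Fin m, f (e.symm j) (g (e.symm j)) :=
    fun g => (Equiv.prod_comp e.symm fun i => f i (g i)).symm
  have he2 : (∑' g : ι → ℕ, ∏ i, f i (g i))
      = ∑' h : Fin m → ℕ, ∏ j : Fin m, f (e.symm j) (h j) := by
    rw [← (Equiv.arrowCongr e (Equiv.refl ℕ)).symm.tsum_eq]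
    congr 1
    ext h
    rw [hG]
    refine Finset.prod_congr rfl fun j _ => ?_
    simp [Equiv.arrowCongr]
  rw [he2, pi_tsum_prod_fin m (fun j => f (e.symm j))]
  exact Equiv.prod_comp e.symm fun i => ∑' k, f i k

lemma ofReal_mul_le_young {x y p q : ℝ} (hx : 0 ≤ x) (hy : 0 ≤ y)
    (hp : 1 < p) (hq : 1 < q) (hpq : p⁻¹ + q⁻¹ = 1) :
    ENNReal.ofReal x * ENNReal.ofReal y ≤ ENNReal.ofReal (x ^ p) + ENNReal.ofReal (y ^ q) := by
  rw [← ENNReal.ofReal_mul hx, ← ENNReal.ofReal_add (Real.rpow_nonneg hx _)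
    (Real.rpow_nonneg hy _)]
  apply ENNReal.ofReal_le_ofReal
  calc x * y ≤ x ^ p / p + y ^ q / q :=
        Real.young_inequality_of_nonneg hx hy ⟨by rw [inv_one]; exact hpq, by linarith, by linarith⟩
    _ ≤ x ^ p + y ^ q := by
        gcongr
        · exact div_le_self (Real.rpow_nonneg hx _) (le_of_lt hp)
        · exact div_le_self (Real.rpow_nonneg hy _) (le_of_lt hq)



lemma real_region {n : ℕ} (hn : 2 ≤ n) {β' β₁ β₂ q' : ℝ} (hβ₁ : 0 ≤ β₁)
    (hsum : β' = β₂ + β₁) (hq' : q' = β' + β₁ / ((n : ℝ) - 1))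
    (i : Fin n) (k : Fin n → ℕ) (hk : ∀ j, k j ≤ k i) :
    (∏ j, ((1:ℝ) + k j) ^ (-β')) ≤
      (∏ j ∈ Finset.univ.erase i, ((1:ℝ) + k j) ^ (-q')) * ((1:ℝ) + k i) ^ (-β₂) := by
  have hpos : ∀ j, (0:ℝ) < 1 + k j := fun j => by positivity
  have hn1 : (1:ℝ) ≤ (n:ℝ) - 1 := by
    have : (2:ℝ) ≤ n := by exact_mod_cast hn
    linarith
  have hcard : (Finset.univ.erase i).card = n - 1 := by
    rw [Finset.card_erase_of_mem (Finset.mem_univ i), Finset.card_univ, Fintype.card_fin]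
  have hcast : ((n - 1 : ℕ) : ℝ) = (n:ℝ) - 1 := by
    have h2 : 1 ≤ n := by omega
    push_cast [Nat.cast_sub h2]
    ring
  have stepA : ((1:ℝ) + k i) ^ (-β₁) =
      ∏ _j ∈ Finset.univ.erase i, ((1:ℝ) + k i) ^ (-(β₁ / ((n:ℝ) - 1))) := by
    rw [Finset.prod_const, hcard, ← Real.rpow_natCast (((1:ℝ) + k i) ^ (-(β₁ / ((n:ℝ)-1)))) (n-1),
      ← Real.rpow_mul (le_of_lt (hpos i)), hcast]
    congr 1
    field_simp
  have stepB : (∏ _j ∈ Finset.univ.erase i, ((1:ℝ) + k i) ^ (-(β₁ / ((n:ℝ) - 1)))) ≤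
      ∏ j ∈ Finset.univ.erase i, ((1:ℝ) + k j) ^ (-(β₁ / ((n:ℝ) - 1))) := by
    refine Finset.prod_le_prod (fun j _ => Real.rpow_nonneg (le_of_lt (hpos i)) _)
      (fun j _ => ?_)
    refine Real.rpow_le_rpow_of_nonpos (hpos j) ?_ ?_
    · have := hk j
      have : ((k j : ℝ)) ≤ k i := by exact_mod_cast this
      linarith
    · have h1 : 0 ≤ β₁ / ((n:ℝ) - 1) := div_nonneg hβ₁ (by linarith)
      linarith
  calc (∏ j, ((1:ℝ) + k j) ^ (-β'))
      = ((1:ℝ) + k i) ^ (-β') * ∏ j ∈ Finset.univ.erase i, ((1:ℝ) + k j) ^ (-β') := by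
        rw [← Finset.mul_prod_erase Finset.univ _ (Finset.mem_univ i)]
    _ = (((1:ℝ) + k i) ^ (-β₂) * ((1:ℝ) + k i) ^ (-β₁)) *
          ∏ j ∈ Finset.univ.erase i, ((1:ℝ) + k j) ^ (-β') := by
        rw [← Real.rpow_add (hpos i)]
        congr 2
        rw [hsum]; ring
    _ ≤ (((1:ℝ) + k i) ^ (-β₂) *
          ∏ j ∈ Finset.univ.erase i, ((1:ℝ) + k j) ^ (-(β₁ / ((n:ℝ) - 1)))) *
          ∏ j ∈ Finset.univ.erase i, ((1:ℝ) + k j) ^ (-β') := by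
        have hB := stepA ▸ stepB
        refine mul_le_mul_of_nonneg_right ?_
          (Finset.prod_nonneg fun j _ => Real.rpow_nonneg (le_of_lt (hpos j)) _)
        exact mul_le_mul_of_nonneg_left hB (Real.rpow_nonneg (le_of_lt (hpos i)) _)
    _ = (∏ j ∈ Finset.univ.erase i, ((1:ℝ) + k j) ^ (-q')) * ((1:ℝ) + k i) ^ (-β₂) := by
        rw [mul_assoc, ← Finset.prod_mul_distrib, mul_comm]
        congr 1
        refine Finset.prod_congr rfl fun j _ => ?_
        rw [← Real.rpow_add (hpos j)]
        congr 1
        rw [hq']; ring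


lemma core (n : ℕ) (hn : 2 ≤ n) (β' : ℝ) (h1 : 1 - 1/(n:ℝ) < β') (h2 : β' < 1)
    (ε : Fin n → ℤ) (hε : ∀ i, ε i ≠ 0) :
    ∑' k : Fin n → ℕ, (∏ i, pw β' (k i)) * uu 1 (∑ i, ε i * (k i : ℤ)) ≠ ⊤ := by
  classical
  have hnR : (2:ℝ) ≤ (n:ℝ) := by exact_mod_cast hn
  have hn0 : (0:ℝ) < n := by linarith
  have hn1 : (0:ℝ) < (n:ℝ) - 1 := by linarith
  set β₁ : ℝ := (((n:ℝ) - 1) * (1 - β') + β') / 2 with hβ₁def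
  set β₂ : ℝ := β' - β₁ with hβ₂def
  set q' : ℝ := β' + β₁ / ((n:ℝ) - 1) with hq'def
  set q : ℝ := 2 / (2 - β₂) with hqdef
  have hinv : 1/(n:ℝ) ≤ 1/2 := by
    apply one_div_le_one_div_of_le <;> linarith
  have hβ'pos : 0 < β' := by linarith
  have hkey : ((n:ℝ) - 1) * (1 - β') < β' := by
    have h' : (n:ℝ) * (1 - 1/(n:ℝ)) < (n:ℝ) * β' := by
      exact mul_lt_mul_of_pos_left h1 hn0
    have h'' : (n:ℝ) * (1 - 1/(n:ℝ)) = (n:ℝ) - 1 := by field_simp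
    nlinarith
  have hβ₁low : ((n:ℝ) - 1) * (1 - β') < β₁ := by rw [hβ₁def]; linarith
  have hβ₁hi : β₁ < β' := by rw [hβ₁def]; linarith
  have hβ₁pos : 0 < β₁ := by
    have : 0 ≤ ((n:ℝ) - 1) * (1 - β') := by
      apply mul_nonneg <;> linarith
    rw [hβ₁def]; linarith
  have hβ₂pos : 0 < β₂ := by rw [hβ₂def]; linarith
  have hβ₂lt1 : β₂ < 1 := by rw [hβ₂def]; linarith
  have hq'1 : 1 < q' := by
    have hd : (1 - β') < β₁ / ((n:ℝ) - 1) := by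
      rw [lt_div_iff₀ hn1]; nlinarith
    rw [hq'def]; linarith
  have hq1 : 1 < q := by
    rw [hqdef, lt_div_iff₀ (by linarith)]; linarith
  have hp1 : 1 < 2/β₂ := by
    rw [lt_div_iff₀ hβ₂pos]; linarith
  have hconj : (2/β₂)⁻¹ + q⁻¹ = 1 := by
    rw [hqdef]
    have h2b : (2:ℝ) - β₂ ≠ 0 := by linarith
    field_simp
    ring
  -- Young step
  have hyoung : ∀ (t : ℕ) (z : ℤ), pw β₂ t * uu 1 z ≤ pw 2 t + uu q z := by
    intro t z
    have h0t : (0:ℝ) ≤ 1 + (t:ℝ) := by positivity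
    have h0z : (0:ℝ) ≤ 1 + |(z:ℝ)| := by positivity
    have hx : (0:ℝ) ≤ (1 + (t:ℝ)) ^ (-β₂) := Real.rpow_nonneg h0t _
    have hy : (0:ℝ) ≤ (1 + |(z:ℝ)|) ^ (-(1:ℝ)) := Real.rpow_nonneg h0z _
    have h := ofReal_mul_le_young hx hy hp1 hq1 hconj
    unfold pw uu
    refine le_trans h (le_of_eq ?_)
    congr 1
    · congr 1
      rw [← Real.rpow_mul h0t]
      congr 1
      field_simp
    · congr 1
      rw [← Real.rpow_mul h0z]
      congr 1
      ring
  set Kz : (Fin n → ℕ) → ℤ := fun k => ∑ i, ε i * (k i : ℤ) with hKzdef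
  set X : (Fin n → ℕ) → ℝ≥0∞ := fun k => (∏ i, pw β' (k i)) * uu 1 (Kz k) with hXdef
  set R : Fin n → (Fin n → ℕ) → ℝ≥0∞ :=
    fun i k => if ∀ j, k j ≤ k i then X k else 0 with hRdef
  -- Step 1 : bound by max-coordinate regions
  have step1 : ∑' k, X k ≤ ∑ i : Fin n, ∑' k, R i k := by
    rw [← Summable.tsum_finsetSum (fun i _ => ENNReal.summable)]
    refine ENNReal.tsum_le_tsum fun k => ?_
    obtain ⟨i₀, -, hmax⟩ := Finset.exists_max_image Finset.univ k
      ⟨⟨0, by omega⟩, Finset.mem_univ _⟩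
    have : X k = R i₀ k := by
      rw [hRdef]
      simp only
      rw [if_pos (fun j => hmax j (Finset.mem_univ j))]
    rw [this]
    exact Finset.single_le_sum (f := fun i => R i k) (fun i _ => zero_le) (Finset.mem_univ i₀)
  -- Step 2 : pointwise bound in each region
  have step2 : ∀ (i : Fin n) (k : Fin n → ℕ),
      R i k ≤ (∏ j ∈ Finset.univ.erase i, pw q' (k j)) * pw 2 (k i)
        + (∏ j ∈ Finset.univ.erase i, pw q' (k j)) * uu q (Kz k) := by
    intro i k
    rw [hRdef]
    simp only
    split_ifs with hreg
    · have hprod : (∏ j, pw β' (k j)) ≤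
          (∏ j ∈ Finset.univ.erase i, pw q' (k j)) * pw β₂ (k i) := by
        unfold pw
        rw [← ENNReal.ofReal_prod_of_nonneg
          (fun j _ => Real.rpow_nonneg (by positivity) _),
          ← ENNReal.ofReal_prod_of_nonneg
          (fun j _ => Real.rpow_nonneg (by positivity) _),
          ← ENNReal.ofReal_mul (Finset.prod_nonneg
            (fun j _ => Real.rpow_nonneg (by positivity) _))]
        exact ENNReal.ofReal_le_ofReal
          (real_region hn (le_of_lt hβ₁pos) (by rw [hβ₂def]; ring) rfl i k hreg)
      calc (∏ j, pw β' (k j)) * uu 1 (Kz k)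
          ≤ ((∏ j ∈ Finset.univ.erase i, pw q' (k j)) * pw β₂ (k i)) * uu 1 (Kz k) :=
            mul_le_mul_left hprod _
        _ = (∏ j ∈ Finset.univ.erase i, pw q' (k j)) * (pw β₂ (k i) * uu 1 (Kz k)) := by
            ring
        _ ≤ (∏ j ∈ Finset.univ.erase i, pw q' (k j)) * (pw 2 (k i) + uu q (Kz k)) :=
            mul_le_mul_right (hyoung (k i) (Kz k)) _
        _ = _ := by ring
    · exact zero_le
  -- the two pieces are finite
  have hA : ∀ i : Fin n,
      (∑' k : Fin n → ℕ, (∏ j ∈ Finset.univ.erase i, pw q' (k j)) * pw 2 (k i)) ≠ ⊤ := by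
    intro i
    have hrw : ∀ k : Fin n → ℕ,
        (∏ j ∈ Finset.univ.erase i, pw q' (k j)) * pw 2 (k i)
          = ∏ j, (fun j => if j = i then pw 2 else pw q') j (k j) := by
      intro k
      rw [← Finset.mul_prod_erase Finset.univ _ (Finset.mem_univ i)]
      simp only [if_pos rfl]
      rw [mul_comm]
      congr 1
      refine Finset.prod_congr rfl fun j hj => ?_
      rw [if_neg (Finset.mem_erase.1 hj).1]
    calc (∑' k : Fin n → ℕ, (∏ j ∈ Finset.univ.erase i, pw q' (k j)) * pw 2 (k i))
        = ∑' k : Fin n → ℕ, ∏ j, (fun j => if j = i then pw 2 else pw q') j (k j) := by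
          exact tsum_congr hrw
      _ = ∏ j, ∑' t : ℕ, (fun j => if j = i then pw 2 else pw q') j t :=
          pi_tsum_prod _
      _ ≠ ⊤ := by
          refine (ENNReal.prod_lt_top fun j _ => ?_).ne
          by_cases hj : j = i
          · simpa [hj] using (tsum_pw_ne_top (show (1:ℝ) < 2 by norm_num)).lt_top
          · simpa [hj] using (tsum_pw_ne_top hq'1).lt_top
  have hB : ∀ i : Fin n,
      (∑' k : Fin n → ℕ, (∏ j ∈ Finset.univ.erase i, pw q' (k j)) * uu q (Kz k)) ≠ ⊤ := by
    intro i
    set e := Equiv.funSplitAt i ℕ with hedef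
    have hcoord_i : ∀ (t : ℕ) (h : {j : Fin n // j ≠ i} → ℕ), (e.symm (t, h)) i = t := by
      intro t h
      simp [hedef, Equiv.funSplitAt, Equiv.piSplitAt]
    have hcoord_ne : ∀ (t : ℕ) (h : {j : Fin n // j ≠ i} → ℕ) (j : Fin n) (hj : j ≠ i),
        (e.symm (t, h)) j = h ⟨j, hj⟩ := by
      intro t h j hj
      simp [hedef, Equiv.funSplitAt, Equiv.piSplitAt, hj]
    have key : ∀ (t : ℕ) (h : {j : Fin n // j ≠ i} → ℕ),
        (∏ j ∈ Finset.univ.erase i, pw q' ((e.symm (t, h)) j)) * uu q (Kz (e.symm (t, h)))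
          = (∏ j' : {j : Fin n // j ≠ i}, pw q' (h j')) *
              uu q (ε i * t + ∑ j' : {j : Fin n // j ≠ i}, ε j'.1 * (h j' : ℤ)) := by
      intro t h
      have hp : (∏ j ∈ Finset.univ.erase i, pw q' ((e.symm (t, h)) j))
          = ∏ j' : {j : Fin n // j ≠ i}, pw q' (h j') := by
        rw [Finset.prod_subtype (p := fun j => j ≠ i) (Finset.univ.erase i)
          (fun j => by simp [Finset.mem_erase]) (fun j => pw q' ((e.symm (t, h)) j))]
        refine Finset.prod_congr rfl fun j' _ => ?_
        rw [hcoord_ne t h j'.1 j'.2]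
      have hk : Kz (e.symm (t, h)) = ε i * t + ∑ j' : {j : Fin n // j ≠ i}, ε j'.1 * (h j' : ℤ) := by
        rw [hKzdef]
        simp only
        rw [← Finset.add_sum_erase Finset.univ _ (Finset.mem_univ i), hcoord_i]
        congr 1
        rw [Finset.sum_subtype (p := fun j => j ≠ i) (Finset.univ.erase i)
          (fun j => by simp [Finset.mem_erase]) (fun j => ε j * ((e.symm (t, h)) j : ℤ))]
        refine Finset.sum_congr rfl fun j' _ => ?_
        rw [hcoord_ne t h j'.1 j'.2]
      rw [hp, hk]
    have hbound : (∑' k : Fin n → ℕ, (∏ j ∈ Finset.univ.erase i, pw q' (k j)) * uu q (Kz k))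
        ≤ (∑' z : ℤ, uu q z) * ∑' (h : {j : Fin n // j ≠ i} → ℕ),
            ∏ j' : {j : Fin n // j ≠ i}, pw q' (h j') := calc
      (∑' k : Fin n → ℕ, (∏ j ∈ Finset.univ.erase i, pw q' (k j)) * uu q (Kz k))
        = ∑' p : ℕ × ({j : Fin n // j ≠ i} → ℕ),
            (∏ j ∈ Finset.univ.erase i, pw q' ((e.symm p) j)) * uu q (Kz (e.symm p)) :=
          (e.symm.tsum_eq _).symm
      _ = ∑' (t : ℕ) (h : {j : Fin n // j ≠ i} → ℕ),
            (∏ j' : {j : Fin n // j ≠ i}, pw q' (h j')) *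
              uu q (ε i * t + ∑ j' : {j : Fin n // j ≠ i}, ε j'.1 * (h j' : ℤ)) := by
          rw [ENNReal.tsum_prod']
          exact tsum_congr fun t => tsum_congr fun h => key t h
      _ = ∑' (h : {j : Fin n // j ≠ i} → ℕ) (t : ℕ),
            (∏ j' : {j : Fin n // j ≠ i}, pw q' (h j')) *
              uu q (ε i * t + ∑ j' : {j : Fin n // j ≠ i}, ε j'.1 * (h j' : ℤ)) :=
          ENNReal.tsum_comm
      _ ≤ ∑' (h : {j : Fin n // j ≠ i} → ℕ),
            (∏ j' : {j : Fin n // j ≠ i}, pw q' (h j')) * ∑' z : ℤ, uu q z := by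
          refine ENNReal.tsum_le_tsum fun h => ?_
          rw [ENNReal.tsum_mul_left]
          exact mul_le_mul_right (uu_shift_le q (ε i) _ (hε i)) _
      _ = (∑' z : ℤ, uu q z) * ∑' (h : {j : Fin n // j ≠ i} → ℕ),
            ∏ j' : {j : Fin n // j ≠ i}, pw q' (h j') := by
          rw [ENNReal.tsum_mul_right, mul_comm]
    refine ne_top_of_le_ne_top ?_ hbound
    refine ENNReal.mul_ne_top (tsum_uu_ne_top hq1) ?_
    rw [pi_tsum_prod (fun _ => pw q')]
    exact (ENNReal.prod_lt_top fun j' _ => (tsum_pw_ne_top hq'1).lt_top).ne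
  -- assemble
  refine ne_top_of_le_ne_top ?_ step1
  refine (ENNReal.sum_lt_top.2 fun i _ => ?_).ne
  refine lt_of_le_of_lt (ENNReal.tsum_le_tsum (step2 i)) ?_
  rw [ENNReal.tsum_add]
  exact ENNReal.add_lt_top.2 ⟨(hA i).lt_top, (hB i).lt_top⟩

lemma box_bound (lam : ℕ → ℝ) (r : ℕ → ℂ) (hpos : ∀ m, 0 < lam m)
    (hlim : Tendsto lam atTop atTop) {β β' C T₀ : ℝ} (hC : 0 < C) (hT₀ : 1 ≤ T₀)
    (hβ'pos : 0 < β') (hββ' : β' ≤ β)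
    (hcoef : ∀ T ≥ T₀,
      (∑' m, if T ≤ lam m ∧ lam m ≤ T + 1 then ‖r m‖ else 0) ≤ C / T ^ β) :
    ∃ Cb : ℝ≥0∞, Cb ≠ ⊤ ∧ ∀ κ : ℕ,
      (∑' j : ℕ, if ⌊lam j⌋₊ = κ then ENNReal.ofReal (‖r j‖) else 0) ≤
        Cb * pw β' κ := by
  classical
  have hfin : ∀ X : ℝ, {j : ℕ | lam j < X}.Finite := by
    intro X
    obtain ⟨N, hN⟩ := Filter.eventually_atTop.1 (hlim.eventually_ge_atTop X)
    refine Set.Finite.subset (Set.finite_Iio N) fun j hj => ?_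
    by_contra hjN
    exact absurd (hN j (by simpa [Set.mem_Iio] using hjN)) (not_le.2 hj)
  set F : Finset ℕ := (hfin (T₀ + 1)).toFinset with hF
  set Esmall : ℝ≥0∞ := ∑ j ∈ F, ENNReal.ofReal (‖r j‖) with hEs
  have hEs_ne : Esmall ≠ ⊤ := by
    rw [hEs]
    exact (ENNReal.sum_lt_top.2 fun j _ => ENNReal.ofReal_lt_top).ne
  refine ⟨max (ENNReal.ofReal (C * 2 ^ β')) (Esmall * ENNReal.ofReal ((1 + T₀) ^ β')), ?_, ?_⟩
  · exact ne_of_lt (max_lt ENNReal.ofReal_lt_top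
      (lt_top_iff_ne_top.2 (ENNReal.mul_ne_top hEs_ne ENNReal.ofReal_ne_top)))
  intro κ
  by_cases hκ : T₀ ≤ (κ:ℝ)
  · -- large κ
    have hκ1 : (1:ℝ) ≤ (κ:ℝ) := le_trans hT₀ hκ
    set g : ℕ → ℝ := fun j =>
      if (κ:ℝ) ≤ lam j ∧ lam j ≤ (κ:ℝ) + 1 then ‖r j‖ else 0 with hg
    have hg_nonneg : ∀ j, 0 ≤ g j := by
      intro j; rw [hg]; dsimp only; split_ifs
      · exact norm_nonneg _
      · rfl
    have hg_summable : Summable g := by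
      refine summable_of_ne_finset_zero (s := (hfin ((κ:ℝ) + 2)).toFinset) fun j hj => ?_
      rw [hg]; dsimp only
      rw [if_neg]
      rintro ⟨-, h2⟩
      exact hj (by simp [Set.Finite.mem_toFinset]; linarith)
    have hpoint : ∀ j : ℕ,
        (if ⌊lam j⌋₊ = κ then ENNReal.ofReal (‖r j‖) else 0) ≤
          ENNReal.ofReal (g j) := by
      intro j
      split_ifs with hfl
      · rw [hg]; dsimp only
        rw [if_pos]
        constructor
        · have := Nat.floor_le (le_of_lt (hpos j))
          rw [hfl] at this
          exact this
        · have := (Nat.lt_floor_add_one (lam j)).le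
          rw [hfl] at this
          push_cast at this ⊢
          linarith
      · exact zero_le
    calc (∑' j : ℕ, if ⌊lam j⌋₊ = κ then ENNReal.ofReal (‖r j‖) else 0)
        ≤ ∑' j : ℕ, ENNReal.ofReal (g j) := ENNReal.tsum_le_tsum hpoint
      _ = ENNReal.ofReal (∑' j, g j) :=
          (ENNReal.ofReal_tsum_of_nonneg hg_nonneg hg_summable).symm
      _ ≤ ENNReal.ofReal (C / (κ:ℝ) ^ β) := ENNReal.ofReal_le_ofReal (hcoef κ hκ)
      _ ≤ ENNReal.ofReal ((C * 2 ^ β') * ((1 + (κ:ℝ)) ^ (-β'))) := by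
          apply ENNReal.ofReal_le_ofReal
          have hk0 : (0:ℝ) < κ := by linarith
          have e1 : C / (κ:ℝ) ^ β = C * (κ:ℝ) ^ (-β) := by
            rw [Real.rpow_neg (le_of_lt hk0), div_eq_mul_inv]
          rw [e1]
          have e2 : (κ:ℝ) ^ (-β) ≤ (κ:ℝ) ^ (-β') :=
            Real.rpow_le_rpow_of_exponent_le hκ1 (by linarith)
          have e3 : (κ:ℝ) ^ (-β') ≤ 2 ^ β' * (1 + (κ:ℝ)) ^ (-β') := by
            have h4 : ((1 + (κ:ℝ)) / 2) ≤ κ := by linarith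
            have h5 : (κ:ℝ) ^ (-β') ≤ ((1 + (κ:ℝ)) / 2) ^ (-β') :=
              Real.rpow_le_rpow_of_nonpos (by linarith) h4 (by linarith)
            refine le_trans h5 (le_of_eq ?_)
            have hb1 : (0:ℝ) ≤ (1 + (κ:ℝ)) / 2 := by linarith
            have hb2 : (0:ℝ) ≤ 1 + (κ:ℝ) := by linarith
            rw [Real.rpow_neg hb1, Real.rpow_neg hb2,
              Real.div_rpow hb2 (by norm_num : (0:ℝ) ≤ 2), inv_div, div_eq_mul_inv]
          calc C * (κ:ℝ) ^ (-β) ≤ C * (κ:ℝ) ^ (-β') := by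
                exact mul_le_mul_of_nonneg_left e2 (le_of_lt hC)
            _ ≤ C * (2 ^ β' * (1 + (κ:ℝ)) ^ (-β')) :=
                mul_le_mul_of_nonneg_left e3 (le_of_lt hC)
            _ = (C * 2 ^ β') * ((1 + (κ:ℝ)) ^ (-β')) := by ring
      _ = ENNReal.ofReal (C * 2 ^ β') * pw β' κ := by
          rw [pw, ← ENNReal.ofReal_mul (by positivity)]
      _ ≤ _ := mul_le_mul_left (le_max_left _ _) _
  · -- small κ
    push_neg at hκ
    have hEbound : (∑' j : ℕ, if ⌊lam j⌋₊ = κ then ENNReal.ofReal (‖r j‖) else 0)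
        ≤ Esmall := by
      have hpt : ∀ j : ℕ, (if ⌊lam j⌋₊ = κ then ENNReal.ofReal (‖r j‖) else 0) ≤
          (if j ∈ F then ENNReal.ofReal (‖r j‖) else 0) := by
        intro j
        split_ifs with hfl hmem hmem
        · exact le_rfl
        · exfalso
          apply hmem
          have h1 : lam j < (κ:ℝ) + 1 := by
            have := Nat.lt_floor_add_one (lam j)
            rw [hfl] at this
            push_cast at this
            linarith
          rw [hF, Set.Finite.mem_toFinset]
          show lam j < T₀ + 1
          linarith
        · exact zero_le
        · exact le_rfl
      calc (∑' j : ℕ, if ⌊lam j⌋₊ = κ then ENNReal.ofReal (‖r j‖) else 0)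
          ≤ ∑' j : ℕ, (if j ∈ F then ENNReal.ofReal (‖r j‖) else 0) :=
            ENNReal.tsum_le_tsum hpt
        _ = ∑ j ∈ F, (if j ∈ F then ENNReal.ofReal (‖r j‖) else 0) :=
            tsum_eq_sum (fun j hj => if_neg hj)
        _ = Esmall := by
            rw [hEs]
            exact Finset.sum_congr rfl fun j hj => if_pos hj
    have hone : (1:ℝ≥0∞) ≤ ENNReal.ofReal ((1 + T₀) ^ β') * pw β' κ := by
      rw [pw, ← ENNReal.ofReal_mul (Real.rpow_nonneg (by linarith) _),
        ENNReal.one_le_ofReal]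
      have hx0 : (0:ℝ) < 1 + (κ:ℝ) := by positivity
      have hid : (1 + (κ:ℝ)) ^ β' * (1 + (κ:ℝ)) ^ (-β') = 1 := by
        rw [← Real.rpow_add hx0]
        simp
      calc (1:ℝ) = (1 + (κ:ℝ)) ^ β' * (1 + (κ:ℝ)) ^ (-β') := hid.symm
        _ ≤ (1 + T₀) ^ β' * (1 + (κ:ℝ)) ^ (-β') :=
            mul_le_mul_of_nonneg_right
              (Real.rpow_le_rpow (le_of_lt hx0) (by linarith) (le_of_lt hβ'pos))
              (Real.rpow_nonneg (le_of_lt hx0) _)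
    calc (∑' j : ℕ, if ⌊lam j⌋₊ = κ then ENNReal.ofReal (‖r j‖) else 0)
        ≤ Esmall := hEbound
      _ = Esmall * 1 := (mul_one _).symm
      _ ≤ Esmall * (ENNReal.ofReal ((1 + T₀) ^ β') * pw β' κ) := mul_le_mul_right hone _
      _ = (Esmall * ENNReal.ofReal ((1 + T₀) ^ β')) * pw β' κ := by ring
      _ ≤ _ := mul_le_mul_left (le_max_right _ _) _

lemma gsum (lam : ℕ → ℝ) (r : ℕ → ℂ) (n : ℕ) (hn : 2 ≤ n) {β' : ℝ}
    (h1 : 1 - 1/(n:ℝ) < β') (h2 : β' < 1)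
    (ε : Fin n → ℤ) (hε : ∀ i, ε i ≠ 0) {Cb : ℝ≥0∞} (hCb : Cb ≠ ⊤)
    (hbox : ∀ κ : ℕ,
      (∑' j : ℕ, if ⌊lam j⌋₊ = κ then ENNReal.ofReal (‖r j‖) else 0) ≤
        Cb * pw β' κ) :
    ∑' J : Fin n → ℕ, (∏ i, ENNReal.ofReal (‖r (J i)‖)) *
      uu 1 (∑ i, ε i * (⌊lam (J i)⌋₊ : ℤ)) ≠ ⊤ := by
  classical
  set a : ℕ → ℝ≥0∞ := fun m => ENNReal.ofReal (‖r m‖) with ha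
  set box : (Fin n → ℕ) → (Fin n → ℕ) := fun J i => ⌊lam (J i)⌋₊ with hbox'
  have hfib : ∀ J : Fin n → ℕ,
      (∏ i, a (J i)) * uu 1 (∑ i, ε i * (⌊lam (J i)⌋₊ : ℤ))
        = ∑' k : Fin n → ℕ,
            if box J = k then (∏ i, a (J i)) * uu 1 (∑ i, ε i * (k i : ℤ)) else 0 := by
    intro J
    rw [tsum_eq_single (box J) (fun k hk => if_neg fun hh => hk hh.symm), if_pos rfl]
  have hinner : ∀ k : Fin n → ℕ,
      (∑' J : Fin n → ℕ,
          if box J = k then (∏ i, a (J i)) * uu 1 (∑ i, ε i * (k i : ℤ)) else 0)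
        = (∏ i, ∑' j : ℕ, if ⌊lam j⌋₊ = k i then a j else 0) *
            uu 1 (∑ i, ε i * (k i : ℤ)) := by
    intro k
    have hpt : ∀ J : Fin n → ℕ,
        (if box J = k then (∏ i, a (J i)) * uu 1 (∑ i, ε i * (k i : ℤ)) else 0)
          = uu 1 (∑ i, ε i * (k i : ℤ)) *
              ∏ i, (if ⌊lam (J i)⌋₊ = k i then a (J i) else 0) := by
      intro J
      rw [prod_ite_zero (fun i => ⌊lam (J i)⌋₊ = k i) (fun i => a (J i))]
      by_cases hJ : box J = k
      · rw [if_pos hJ, if_pos (fun i => congrFun hJ i), mul_comm]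
      · rw [if_neg hJ, if_neg (fun hall => hJ (funext hall)), mul_zero]
    rw [tsum_congr hpt, ENNReal.tsum_mul_left,
      pi_tsum_prod (fun i => fun j => if ⌊lam j⌋₊ = k i then a j else 0), mul_comm]
  have hmain : (∑' J : Fin n → ℕ, (∏ i, a (J i)) * uu 1 (∑ i, ε i * (⌊lam (J i)⌋₊ : ℤ)))
      = ∑' k : Fin n → ℕ, (∏ i, ∑' j : ℕ, if ⌊lam j⌋₊ = k i then a j else 0) *
          uu 1 (∑ i, ε i * (k i : ℤ)) := by
    rw [tsum_congr hfib, ENNReal.tsum_comm]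
    exact tsum_congr hinner
  rw [hmain]
  have hbd : ∀ k : Fin n → ℕ,
      (∏ i, ∑' j : ℕ, if ⌊lam j⌋₊ = k i then a j else 0) * uu 1 (∑ i, ε i * (k i : ℤ))
        ≤ Cb ^ n * ((∏ i, pw β' (k i)) * uu 1 (∑ i, ε i * (k i : ℤ))) := by
    intro k
    have hprod : (∏ i, ∑' j : ℕ, if ⌊lam j⌋₊ = k i then a j else 0)
        ≤ Cb ^ n * ∏ i, pw β' (k i) := by
      calc (∏ i, ∑' j : ℕ, if ⌊lam j⌋₊ = k i then a j else 0)
          ≤ ∏ i, Cb * pw β' (k i) :=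
            Finset.prod_le_prod' fun i _ => hbox (k i)
        _ = Cb ^ n * ∏ i, pw β' (k i) := by
            rw [Finset.prod_mul_distrib, Finset.prod_const, Finset.card_univ,
              Fintype.card_fin]
    calc (∏ i, ∑' j : ℕ, if ⌊lam j⌋₊ = k i then a j else 0) * uu 1 (∑ i, ε i * (k i : ℤ))
        ≤ (Cb ^ n * ∏ i, pw β' (k i)) * uu 1 (∑ i, ε i * (k i : ℤ)) :=
          mul_le_mul_left hprod _
      _ = Cb ^ n * ((∏ i, pw β' (k i)) * uu 1 (∑ i, ε i * (k i : ℤ))) := by ring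
  refine ne_top_of_le_ne_top ?_ (ENNReal.tsum_le_tsum hbd)
  rw [ENNReal.tsum_mul_left]
  exact ENNReal.mul_ne_top (ENNReal.pow_ne_top hCb) (core n hn β' h1 h2 ε hε)

end Stmt2Aux

open Stmt2Aux in
/-- Lemma 2.3: the off-diagonal multidimensional sum is uniformly bounded in `Y ≥ 1`. -/
theorem stmt2
    (lam : ℕ → ℝ) (r : ℕ → ℂ) (β : ℝ) (n : ℕ)
    (hmono : StrictMono lam) (hpos : ∀ m, 0 < lam m)
    (hlim : Tendsto lam atTop atTop)
    (hn : 2 ≤ n) (hβ : β > 1 - 1 / (n : ℝ))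
    (hcoef : ∃ C T₀ : ℝ, 0 < C ∧ 1 ≤ T₀ ∧ ∀ T ≥ T₀,
      (∑' m, if T ≤ lam m ∧ lam m ≤ T + 1 then ‖r m‖ else 0) ≤ C / T ^ β) :
    ∃ C : ℝ, ∀ Y ≥ (1:ℝ),
      (∑ s ∈ Finset.range (n + 1), ∑' J : Fin n → ℕ,
        (if (∑ i : Fin n, (if (i : ℕ) < s then (1:ℝ) else -1) * lam (J i)) ≠ 0 then
          (∏ i : Fin n, ‖r (J i)‖) /
            (1 + Y * |∑ i : Fin n, (if (i : ℕ) < s then (1:ℝ) else -1) * lam (J i)|)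
        else 0)) ≤ C := by
  classical
  obtain ⟨C0, T₀, hC0, hT₀, hcoef'⟩ := hcoef
  have hnR : (2:ℝ) ≤ (n:ℝ) := by exact_mod_cast hn
  have hinv : 1/(n:ℝ) ≤ 1/2 := by
    apply one_div_le_one_div_of_le <;> linarith
  have hinv2 : 1/(2*(n:ℝ)) < 1/(n:ℝ) := by
    apply one_div_lt_one_div_of_lt <;> linarith
  set β' : ℝ := min β (1 - 1/(2*(n:ℝ))) with hβ'def
  have h1' : 1 - 1/(n:ℝ) < β' := lt_min hβ (by linarith)
  have h2' : β' < 1 := by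
    have : β' ≤ 1 - 1/(2*(n:ℝ)) := min_le_right _ _
    have h0 : 0 < 1/(2*(n:ℝ)) := by positivity
    linarith
  have hβ'pos : 0 < β' := by linarith
  have hββ' : β' ≤ β := min_le_left _ _
  obtain ⟨Cb, hCb, hbox⟩ :=
    Stmt2Aux.box_bound lam r hpos hlim hC0 hT₀ hβ'pos hββ' hcoef'
  -- sign vectors
  set εz : ℕ → Fin n → ℤ := fun s i => if (i:ℕ) < s then 1 else -1 with hεzdef
  have hεz : ∀ s i, εz s i ≠ 0 := by
    intro s i
    rw [hεzdef]
    dsimp only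
    split_ifs <;> simp
  have hG : ∀ s : ℕ, (∑' J : Fin n → ℕ, (∏ i, ENNReal.ofReal (‖r (J i)‖)) *
      uu 1 (∑ i, εz s i * (⌊lam (J i)⌋₊ : ℤ))) ≠ ⊤ :=
    fun s => Stmt2Aux.gsum lam r n hn h1' h2' (εz s) (hεz s) hCb hbox
  refine ⟨∑ s ∈ Finset.range (n + 1),
    ((n:ℝ) + 1) * (∑' J : Fin n → ℕ, (∏ i, ENNReal.ofReal (‖r (J i)‖)) *
      uu 1 (∑ i, εz s i * (⌊lam (J i)⌋₊ : ℤ))).toReal, fun Y hY => ?_⟩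
  refine Finset.sum_le_sum fun s _ => ?_
  have hY0 : (0:ℝ) < Y := lt_of_lt_of_le one_pos hY
  set G : (Fin n → ℕ) → ℝ≥0∞ := fun J => (∏ i, ENNReal.ofReal (‖r (J i)‖)) *
      uu 1 (∑ i, εz s i * (⌊lam (J i)⌋₊ : ℤ)) with hGdef
  set L : (Fin n → ℕ) → ℝ :=
    fun J => ∑ i : Fin n, (if (i : ℕ) < s then (1:ℝ) else -1) * lam (J i) with hLdef
  set P : (Fin n → ℕ) → ℝ := fun J => ∏ i : Fin n, ‖r (J i)‖ with hPdef
  have hP0 : ∀ J, 0 ≤ P J := fun J => Finset.prod_nonneg fun i _ => norm_nonneg _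
  have hGval : ∀ J, G J = ENNReal.ofReal
      (P J * (1 + |((∑ i, εz s i * (⌊lam (J i)⌋₊ : ℤ) : ℤ) : ℝ)|)⁻¹) := by
    intro J
    rw [hGdef]
    dsimp only
    rw [Stmt2Aux.uu, Real.rpow_neg_one,
      ← ENNReal.ofReal_prod_of_nonneg (fun i _ => norm_nonneg _),
      ← ENNReal.ofReal_mul (hP0 J)]
  have hGne : ∀ J, G J ≠ ⊤ := fun J => by rw [hGval J]; exact ENNReal.ofReal_ne_top
  have hGtoReal : ∀ J, (G J).toReal
      = P J * (1 + |((∑ i, εz s i * (⌊lam (J i)⌋₊ : ℤ) : ℤ) : ℝ)|)⁻¹ := by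
    intro J
    rw [hGval J, ENNReal.toReal_ofReal]
    have h0 : (0:ℝ) ≤ (1 + |((∑ i, εz s i * (⌊lam (J i)⌋₊ : ℤ) : ℤ) : ℝ)|)⁻¹ := by positivity
    exact mul_nonneg (hP0 J) h0
  -- pointwise comparison
  have hpt : ∀ J : Fin n → ℕ,
      (if L J ≠ 0 then P J / (1 + Y * |L J|) else 0) ≤ ((n:ℝ) + 1) * (G J).toReal := by
    intro J
    set K : ℝ := ((∑ i, εz s i * (⌊lam (J i)⌋₊ : ℤ) : ℤ) : ℝ) with hKdef
    have hRHSnn : 0 ≤ ((n:ℝ) + 1) * (G J).toReal := by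
      apply mul_nonneg (by linarith)
      exact ENNReal.toReal_nonneg
    split_ifs with hL
    · -- main case
      have hKL : |K - L J| ≤ (n:ℝ) := by
        have hKexp : K = ∑ i : Fin n, (if (i : ℕ) < s then (1:ℝ) else -1) * (⌊lam (J i)⌋₊ : ℝ) := by
          rw [hKdef]
          push_cast
          refine Finset.sum_congr rfl fun i _ => ?_
          rw [hεzdef]
          dsimp only
          split_ifs <;> push_cast <;> ring
        rw [hKexp, hLdef]
        dsimp only
        rw [← Finset.sum_sub_distrib]
        refine le_trans (Finset.abs_sum_le_sum_abs _ _) ?_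
        have : ∀ i : Fin n,
            |(if (i : ℕ) < s then (1:ℝ) else -1) * (⌊lam (J i)⌋₊ : ℝ) -
              (if (i : ℕ) < s then (1:ℝ) else -1) * lam (J i)| ≤ 1 := by
          intro i
          have hfl1 : (⌊lam (J i)⌋₊ : ℝ) ≤ lam (J i) := Nat.floor_le (le_of_lt (hpos _))
          have hfl2 : lam (J i) < (⌊lam (J i)⌋₊ : ℝ) + 1 := Nat.lt_floor_add_one _
          rw [← mul_sub, abs_mul]
          have habs1 : |(if (i : ℕ) < s then (1:ℝ) else -1)| = 1 := by
            split_ifs <;> simp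
          rw [habs1, one_mul, abs_le]
          constructor <;> linarith
        calc (∑ i : Fin n, |(if (i : ℕ) < s then (1:ℝ) else -1) * (⌊lam (J i)⌋₊ : ℝ) -
              (if (i : ℕ) < s then (1:ℝ) else -1) * lam (J i)|)
            ≤ ∑ _i : Fin n, (1:ℝ) := Finset.sum_le_sum fun i _ => this i
          _ = n := by simp
      have hK : |K| ≤ |L J| + n := by
        have := abs_sub_abs_le_abs_sub K (L J)
        linarith [abs_nonneg (L J)]
      have hdY : (0:ℝ) < 1 + Y * |L J| := by positivity
      have hdK : (0:ℝ) < 1 + |K| := by positivity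
      have hYL : |L J| ≤ Y * |L J| :=
        le_mul_of_one_le_left (abs_nonneg _) hY
      have key : 1 + |K| ≤ ((n:ℝ) + 1) * (1 + Y * |L J|) := by
        have hnY : 0 ≤ (n:ℝ) * (Y * |L J|) := by positivity
        nlinarith
      rw [hGtoReal, ← hKdef]
      have hstep : P J / (1 + Y * |L J|) ≤ (((n:ℝ) + 1) * P J) / (1 + |K|) := by
        rw [div_le_div_iff₀ hdY hdK]
        nlinarith [mul_le_mul_of_nonneg_left key (hP0 J)]
      refine le_trans hstep (le_of_eq ?_)
      field_simp
    · exact hRHSnn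
  have hg_summable : Summable (fun J : Fin n → ℕ => ((n:ℝ) + 1) * (G J).toReal) :=
    (ENNReal.summable_toReal (hG s)).mul_left _
  have ht_nonneg : ∀ J : Fin n → ℕ,
      0 ≤ (if L J ≠ 0 then P J / (1 + Y * |L J|) else 0) := by
    intro J
    split_ifs with hL
    · apply div_nonneg (hP0 J)
      positivity
    · exact le_rfl
  have ht_summable : Summable (fun J : Fin n → ℕ =>
      if L J ≠ 0 then P J / (1 + Y * |L J|) else 0) :=
    hg_summable.of_nonneg_of_le ht_nonneg hpt
  calc (∑' J : Fin n → ℕ, if L J ≠ 0 then P J / (1 + Y * |L J|) else 0)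
      ≤ ∑' J : Fin n → ℕ, ((n:ℝ) + 1) * (G J).toReal :=
        Summable.tsum_le_tsum hpt ht_summable hg_summable
    _ = ((n:ℝ) + 1) * ∑' J : Fin n → ℕ, (G J).toReal := tsum_mul_left
    _ = ((n:ℝ) + 1) * (∑' J : Fin n → ℕ, G J).toReal := by
        rw [ENNReal.tsum_toReal_eq hGne]
end

section
/- Let $\{\lambda_n\}$ be a strictly increasing sequence of positive reals tending to infinity and $\{r_n\}$ complex numbers with $\sum_{T\leq\lambda_n\leq T+1}|r_n|\ll T^{-\beta}$ for $T\gg 1$, where $\beta>1-1/n$ for some integer $n\geq 2$. Then the series $\sum |r_{j_1}\cdots r_{j_n}|$, taken over all $n$-tuples of frequencies satisfying $\lambda_{j_1}+\cdots+\lambda_{j_s}-\lambda_{j_{s+1}}-\cdots-\lambda_{j_n}=0$ for any fixed $0\leq s\leq n$, converges. -/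
open Filter Topology

set_option maxHeartbeats 1000000 in
private lemma piSummableFin {w : ℕ → ℝ} (hw : Summable w) (h0 : ∀ m, 0 ≤ w m) :
    ∀ k, Summable (fun K : Fin k → ℕ => ∏ i, w (K i)) := by
  intro k
  induction k with
  | zero =>
    have : (fun K : Fin 0 → ℕ => ∏ i, w (K i)) = fun _ => (1:ℝ) := by
      funext K; simp
    rw [this]
    exact ⟨1, hasSum_single (α := ℝ) (β := Fin 0 → ℕ) (f := fun _ => (1:ℝ))
      (fun i => (i : Fin 0).elim0)
      (fun b' hb' => absurd (funext fun i => (i : Fin 0).elim0) hb')⟩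
  | succ k ih =>
    have h0' : (0 : ℕ → ℝ) ≤ w := h0
    have hp : (0 : (Fin k → ℕ) → ℝ) ≤ fun K : Fin k → ℕ => ∏ i, w (K i) :=
      fun K => Finset.prod_nonneg fun i _ => h0 _
    have hs := Summable.mul_of_nonneg hw ih h0' hp
    have key : Summable ((fun K : Fin (k+1) → ℕ => ∏ i, w (K i))
        ∘ (Fin.consEquiv fun _ : Fin (k+1) => ℕ)) := by
      have heq : ((fun K : Fin (k+1) → ℕ => ∏ i, w (K i))
          ∘ (Fin.consEquiv fun _ : Fin (k+1) => ℕ))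
          = fun x : ℕ × (Fin k → ℕ) => w x.1 * ∏ i, w (x.2 i) := by
        funext x
        simp [Fin.consEquiv, Fin.prod_univ_succ]
      rw [heq]; exact hs
    exact (Equiv.summable_iff _).mp key

set_option maxHeartbeats 1000000 in
private lemma piSummable {w : ℕ → ℝ} (hw : Summable w) (h0 : ∀ m, 0 ≤ w m)
    (α : Type) [Fintype α] : Summable (fun K : α → ℕ => ∏ i, w (K i)) := by
  have e : α ≃ Fin (Fintype.card α) := Fintype.equivFin α
  set E : (Fin (Fintype.card α) → ℕ) ≃ (α → ℕ) := Equiv.arrowCongr e.symm (Equiv.refl ℕ)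
    with hEdef
  refine (E.summable_iff (f := fun K : α → ℕ => ∏ i, w (K i))).mp ?_
  have h3 : ((fun K : α → ℕ => ∏ i, w (K i)) ∘ E)
      = fun K : Fin (Fintype.card α) → ℕ => ∏ j, w (K j) := by
    funext K
    have hE : ∀ i : α, E K i = K (e i) := fun i => by
      rw [hEdef]
      simp [Equiv.arrowCongr]
    calc ∏ i : α, w (E K i) = ∏ i : α, w (K (e i)) :=
          Finset.prod_congr rfl (fun i _ => by rw [hE i])
      _ = ∏ j, w (K j) := Equiv.prod_comp e (fun j => w (K j))
  rw [h3]
  exact piSummableFin hw h0 _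

/-- monotonicity of x ↦ x^(-e) -/
private lemma rpow_neg_anti {x y e : ℝ} (hx : 0 < x) (hxy : x ≤ y) (he : 0 ≤ e) :
    y ^ (-e) ≤ x ^ (-e) := by
  have hy : 0 < y := lt_of_lt_of_le hx hxy
  rw [Real.rpow_neg hx.le, Real.rpow_neg hy.le]
  exact inv_anti₀ (Real.rpow_pos_of_pos hx e) (Real.rpow_le_rpow hx.le hxy he)

set_option maxHeartbeats 2000000 in
/-- Absolute convergence of the diagonal multidimensional sum. -/
theorem stmt3
    (lam : ℕ → ℝ) (r : ℕ → ℂ) (β : ℝ) (n : ℕ)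
    (hmono : StrictMono lam) (hpos : ∀ m, 0 < lam m)
    (hlim : Tendsto lam atTop atTop)
    (hn : 2 ≤ n) (hβ : β > 1 - 1 / (n : ℝ))
    (hcoef : ∃ C T₀ : ℝ, 0 < C ∧ 1 ≤ T₀ ∧ ∀ T ≥ T₀,
      (∑' m, if T ≤ lam m ∧ lam m ≤ T + 1 then ‖r m‖ else 0) ≤ C / T ^ β) :
    ∀ s ≤ n, Summable (fun J : {J : Fin n → ℕ //
        (∑ i : Fin n, (if (i : ℕ) < s then (1:ℝ) else -1) * lam (J i)) = 0} =>
      ∏ i : Fin n, ‖r (J.1 i)‖) := by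
  intro s _hs
  obtain ⟨C, T₀, hC, hT₀, hbd⟩ := hcoef
  -- basic numerics
  have hN2 : (2:ℝ) ≤ (n:ℝ) := by exact_mod_cast hn
  have hN1 : (0:ℝ) < (n:ℝ) - 1 := by linarith
  have hβ0 : 0 < β := by
    have h1 : 1 / (n:ℝ) ≤ 1 / 2 := by
      apply one_div_le_one_div_of_le <;> linarith
    linarith
  set δ : ℝ := β / ((n:ℝ) - 1) with hδdef
  have hδ0 : 0 < δ := div_pos hβ0 hN1
  have hγ1 : 1 < β + δ := by
    have hN0 : (0:ℝ) < (n:ℝ) := by linarith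
    have e1 : (1 - 1/(n:ℝ)) * (n:ℝ) = (n:ℝ) - 1 := by field_simp
    have h2 : (n:ℝ) - 1 < β * (n:ℝ) := by nlinarith
    have h3 : (1 - β) < β / ((n:ℝ) - 1) := by
      rw [lt_div_iff₀ hN1]; nlinarith
    linarith
  -- finiteness of windows
  have hfin : ∀ X : ℝ, {m : ℕ | lam m ≤ X}.Finite := by
    intro X
    obtain ⟨N, hN⟩ := (hlim.eventually_gt_atTop X).exists_forall_of_atTop
    apply Set.Finite.subset (Set.finite_Iio N)
    intro m hm
    simp only [Set.mem_setOf_eq] at hm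
    by_contra hcon
    exact absurd (hN m (not_lt.mp hcon)) (not_lt.mpr hm)
  have hif0 : ∀ (T : ℝ) (m : ℕ),
      0 ≤ (if T ≤ lam m ∧ lam m ≤ T + 1 then ‖r m‖ else 0) := by
    intro T m; split_ifs
    · exact norm_nonneg _
    · exact le_rfl
  have hwin : ∀ T : ℝ,
      Summable (fun m => if T ≤ lam m ∧ lam m ≤ T + 1 then ‖r m‖ else 0) := by
    intro T
    apply summable_of_ne_finset_zero (s := (hfin (T+1)).toFinset)
    intro m hm
    rw [Set.Finite.mem_toFinset] at hm
    simp only [Set.mem_setOf_eq] at hm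
    rw [if_neg (fun hc => hm hc.2)]
  -- pointwise bound |r m| ≤ D * lam m ^ (-β)
  obtain ⟨D, hD0, hD⟩ : ∃ D : ℝ, 0 < D ∧
      ∀ m, ‖r m‖ ≤ D * (lam m) ^ (-β) := by
    set Sf := (hfin T₀).toFinset with hSf
    set D₁ : ℝ := ∑ m ∈ Sf, ‖r m‖ * (lam m) ^ β with hD₁
    refine ⟨max C D₁, lt_max_of_lt_left hC, ?_⟩
    intro m
    have hcancel : (lam m) ^ β * (lam m) ^ (-β) = 1 := by
      rw [← Real.rpow_add (hpos m)]; simp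
    by_cases hm : lam m ≤ T₀
    · have hmem : m ∈ Sf := by rw [hSf, Set.Finite.mem_toFinset]; exact hm
      have h1 : ‖r m‖ * (lam m) ^ β ≤ D₁ :=
        Finset.single_le_sum (f := fun m => ‖r m‖ * (lam m) ^ β)
          (fun i _ => mul_nonneg (norm_nonneg _) (Real.rpow_nonneg (hpos i).le _))
          hmem
      have h2 : ‖r m‖ = (‖r m‖ * (lam m) ^ β) * (lam m) ^ (-β) := by
        rw [mul_assoc, hcancel, mul_one]
      rw [h2]
      apply mul_le_mul_of_nonneg_right (le_trans h1 (le_max_right _ _))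
        (Real.rpow_nonneg (hpos m).le _)
    · push_neg at hm
      have h1 : ‖r m‖
          ≤ ∑' m', (if lam m ≤ lam m' ∧ lam m' ≤ lam m + 1 then ‖r m'‖ else 0) := by
        have := (hwin (lam m)).le_tsum m (fun j _ => hif0 _ j)
        simpa using this
      have h2 := hbd (lam m) hm.le
      have h3 : C / (lam m) ^ β = C * (lam m) ^ (-β) := by
        rw [Real.rpow_neg (hpos m).le, div_eq_mul_inv]
      calc ‖r m‖ ≤ C / (lam m) ^ β := le_trans h1 h2
        _ = C * (lam m) ^ (-β) := h3
        _ ≤ max C D₁ * (lam m) ^ (-β) :=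
            mul_le_mul_of_nonneg_right (le_max_left _ _) (Real.rpow_nonneg (hpos m).le _)
  -- the weight function
  set w : ℕ → ℝ := fun m => ‖r m‖ * (lam m) ^ (-δ) with hwdef
  have hw0 : ∀ m, 0 ≤ w m := fun m =>
    mul_nonneg (norm_nonneg _) (Real.rpow_nonneg (hpos m).le _)
  -- summability of w
  have hwsum : Summable w := by
    set K₀ : ℕ := ⌈T₀⌉₊ with hK₀
    have hK₀1 : 1 ≤ K₀ := Nat.one_le_ceil_iff.mpr (by linarith)
    have hK₀T : T₀ ≤ (K₀ : ℝ) := Nat.le_ceil T₀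
    set SK := (hfin (K₀ : ℝ)).toFinset with hSK
    set A : ℝ := ∑ m ∈ SK, w m with hA
    have hZs : Summable (fun k : ℕ => C * (k:ℝ) ^ (-(β+δ))) :=
      (Real.summable_nat_rpow.mpr (by linarith)).mul_left C
    set Z : ℝ := ∑' k : ℕ, C * (k:ℝ) ^ (-(β+δ)) with hZ
    have hw0' : (0 : ℕ → ℝ) ≤ w := hw0
    apply summable_of_sum_le (c := A + Z) hw0'
    intro F
    rw [← Finset.sum_filter_add_sum_filter_not F (fun m => ⌊lam m⌋₊ < K₀) w]
    have hb1 : ∑ m ∈ F.filter (fun m => ⌊lam m⌋₊ < K₀), w m ≤ A := by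
      apply Finset.sum_le_sum_of_subset_of_nonneg
      · intro m hm
        rw [Finset.mem_filter] at hm
        rw [hSK, Set.Finite.mem_toFinset]
        exact (Nat.lt_of_floor_lt hm.2).le
      · intro m _ _; exact hw0 m
    have hb2 : ∑ m ∈ F.filter (fun m => ¬ ⌊lam m⌋₊ < K₀), w m ≤ Z := by
      set F₂ := F.filter (fun m => ¬ ⌊lam m⌋₊ < K₀) with hF₂
      rw [← Finset.sum_fiberwise_of_maps_to (g := fun m => ⌊lam m⌋₊)
        (t := F₂.image fun m => ⌊lam m⌋₊) (fun m hm => Finset.mem_image_of_mem _ hm) w]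
      have hfiber : ∀ k ∈ F₂.image (fun m => ⌊lam m⌋₊),
          ∑ m ∈ F₂.filter (fun m => ⌊lam m⌋₊ = k), w m ≤ C * (k:ℝ) ^ (-(β+δ)) := by
        intro k hk
        obtain ⟨m₀, hm₀, hk0⟩ := Finset.mem_image.mp hk
        have hkK : K₀ ≤ k := by
          have h := (Finset.mem_filter.mp hm₀).2
          omega
        have hkT : T₀ ≤ (k:ℝ) := le_trans hK₀T (Nat.cast_le.mpr hkK)
        have hk1 : (1:ℝ) ≤ (k:ℝ) := by exact_mod_cast le_trans hK₀1 hkK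
        have hkpos : (0:ℝ) < (k:ℝ) := by linarith
        have hmem : ∀ m ∈ F₂.filter (fun m => ⌊lam m⌋₊ = k),
            (k:ℝ) ≤ lam m ∧ lam m ≤ (k:ℝ) + 1 := by
          intro m hm
          have hfl : ⌊lam m⌋₊ = k := (Finset.mem_filter.mp hm).2
          constructor
          · rw [← hfl]; exact Nat.floor_le (hpos m).le
          · have h := Nat.lt_floor_add_one (lam m)
            rw [hfl] at h; linarith
        calc ∑ m ∈ F₂.filter (fun m => ⌊lam m⌋₊ = k), w m
            ≤ ∑ m ∈ F₂.filter (fun m => ⌊lam m⌋₊ = k), ‖r m‖ * (k:ℝ) ^ (-δ) := by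
              apply Finset.sum_le_sum
              intro m hm
              exact mul_le_mul_of_nonneg_left
                (rpow_neg_anti hkpos (hmem m hm).1 hδ0.le) (norm_nonneg _)
          _ = (∑ m ∈ F₂.filter (fun m => ⌊lam m⌋₊ = k), ‖r m‖) * (k:ℝ) ^ (-δ) := by
              rw [Finset.sum_mul]
          _ ≤ (C / (k:ℝ) ^ β) * (k:ℝ) ^ (-δ) := by
              apply mul_le_mul_of_nonneg_right ?_ (Real.rpow_nonneg hkpos.le _)
              calc ∑ m ∈ F₂.filter (fun m => ⌊lam m⌋₊ = k), ‖r m‖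
                  = ∑ m ∈ F₂.filter (fun m => ⌊lam m⌋₊ = k),
                      (if (k:ℝ) ≤ lam m ∧ lam m ≤ (k:ℝ) + 1 then ‖r m‖ else 0) := by
                    apply Finset.sum_congr rfl
                    intro m hm
                    rw [if_pos (hmem m hm)]
                _ ≤ ∑' m, (if (k:ℝ) ≤ lam m ∧ lam m ≤ (k:ℝ) + 1 then ‖r m‖ else 0) :=
                    Summable.sum_le_tsum _ (fun i _ => hif0 _ i) (hwin _)
                _ ≤ C / (k:ℝ) ^ β := hbd (k:ℝ) hkT
          _ = C * (k:ℝ) ^ (-(β+δ)) := by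
              rw [show (-(β+δ)) = -β + -δ by ring, Real.rpow_add hkpos,
                Real.rpow_neg hkpos.le β, div_eq_mul_inv, mul_assoc]
      calc ∑ k ∈ F₂.image (fun m => ⌊lam m⌋₊),
            ∑ m ∈ F₂.filter (fun m => ⌊lam m⌋₊ = k), w m
          ≤ ∑ k ∈ F₂.image (fun m => ⌊lam m⌋₊), C * (k:ℝ) ^ (-(β+δ)) :=
            Finset.sum_le_sum hfiber
        _ ≤ Z := Summable.sum_le_tsum _
            (fun k _ => mul_nonneg hC.le (Real.rpow_nonneg (Nat.cast_nonneg k) _)) hZs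
    linarith
  -- set up the injection
  have hnne : Nonempty (Fin n) := ⟨⟨0, by omega⟩⟩
  set I := {J : Fin n → ℕ //
      (∑ i : Fin n, (if (i : ℕ) < s then (1:ℝ) else -1) * lam (J i)) = 0} with hI
  have argmax : ∀ J : I, ∃ p : Fin n, ∀ i, J.1 i ≤ J.1 p := fun J => Finite.exists_max J.1
  choose P hP using argmax
  set Φ : I → Σ p : Fin n, ({i : Fin n // i ≠ p} → ℕ) :=
    fun J => ⟨P J, fun i => J.1 i.1⟩ with hΦ
  have hΦinj : Function.Injective Φ := by
    intro J J' hJJ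
    have hp : P J = P J' := congrArg Sigma.fst hJJ
    obtain ⟨h1, h2⟩ := Sigma.mk.inj_iff.mp hJJ
    rw [← hp] at h2
    have h3 := eq_of_heq h2
    have hK : ∀ i : Fin n, i ≠ P J → J.1 i = J'.1 i := by
      intro i hi
      exact congrFun h3 ⟨i, hi⟩
    have hsum0 : ∑ i : Fin n, (if (i : ℕ) < s then (1:ℝ) else -1)
        * (lam (J.1 i) - lam (J'.1 i)) = 0 := by
      have e1 := J.2
      have e2 := J'.2
      simp only [mul_sub]
      rw [Finset.sum_sub_distrib, e1, e2, sub_zero]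
    have hsingle : (if ((P J : Fin n) : ℕ) < s then (1:ℝ) else -1)
        * (lam (J.1 (P J)) - lam (J'.1 (P J))) = 0 := by
      have h6 : ∑ i : Fin n, (if (i : ℕ) < s then (1:ℝ) else -1)
          * (lam (J.1 i) - lam (J'.1 i))
          = (if ((P J : Fin n) : ℕ) < s then (1:ℝ) else -1)
            * (lam (J.1 (P J)) - lam (J'.1 (P J))) := by
        apply Finset.sum_eq_single (P J)
        · intro i _ hi
          rw [hK i hi]
          ring
        · intro h; exact absurd (Finset.mem_univ _) h
      rw [← h6]
      exact hsum0
    have hε : (if ((P J : Fin n) : ℕ) < s then (1:ℝ) else -1) ≠ 0 := by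
      split_ifs <;> norm_num
    have h4 : lam (J.1 (P J)) = lam (J'.1 (P J)) := by
      rcases mul_eq_zero.mp hsingle with h | h
      · exact absurd h hε
      · linarith [h]
    have h5 : J.1 (P J) = J'.1 (P J) := hmono.injective h4
    apply Subtype.ext
    funext i
    by_cases hi : i = P J
    · rw [hi]; exact h5
    · exact hK i hi
  -- the majorant
  set g : (Σ p : Fin n, ({i : Fin n // i ≠ p} → ℕ)) → ℝ :=
    fun x => D * ∏ i, w (x.2 i) with hg
  have hgs : Summable g := by
    apply (summable_sigma_of_nonneg ?_).mpr ⟨?_, ?_⟩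
    · intro x
      exact mul_nonneg hD0.le (Finset.prod_nonneg fun i _ => hw0 _)
    · intro p
      exact (piSummable hwsum hw0 _).mul_left D
    · exact Summable.of_finite
  -- pointwise domination
  have hdom : ∀ J : I, ∏ i : Fin n, ‖r (J.1 i)‖
      ≤ D * ∏ i : {i : Fin n // i ≠ P J}, w (J.1 i.1) := by
    intro J
    have hmax : ∀ i, lam (J.1 i) ≤ lam (J.1 (P J)) := fun i => hmono.monotone (hP J i)
    have hcard : (Finset.univ.erase (P J)).card = n - 1 := by
      rw [Finset.card_erase_of_mem (Finset.mem_univ _), Finset.card_univ, Fintype.card_fin]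
    have hkey : ‖r (J.1 (P J))‖
        ≤ D * ∏ i ∈ Finset.univ.erase (P J), (lam (J.1 i)) ^ (-δ) := by
      have step1 : ‖r (J.1 (P J))‖ ≤ D * (lam (J.1 (P J))) ^ (-β) := hD _
      have step2 : (lam (J.1 (P J))) ^ (-β)
          = ∏ _i ∈ Finset.univ.erase (P J), (lam (J.1 (P J))) ^ (-δ) := by
        rw [Finset.prod_const, hcard, ← Real.rpow_natCast ((lam (J.1 (P J))) ^ (-δ)) (n-1),
          ← Real.rpow_mul (hpos _).le]
        congr 1
        have hcast : ((n - 1 : ℕ) : ℝ) = (n:ℝ) - 1 := by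
          have : 1 ≤ n := by omega
          push_cast [this]
          ring
        rw [hcast, hδdef]
        field_simp
      have step3 : ∏ _i ∈ Finset.univ.erase (P J), (lam (J.1 (P J))) ^ (-δ)
          ≤ ∏ i ∈ Finset.univ.erase (P J), (lam (J.1 i)) ^ (-δ) := by
        apply Finset.prod_le_prod
        · intro i _; exact Real.rpow_nonneg (hpos _).le _
        · intro i _; exact rpow_neg_anti (hpos _) (hmax i) hδ0.le
      calc ‖r (J.1 (P J))‖ ≤ D * (lam (J.1 (P J))) ^ (-β) := step1
        _ = D * ∏ _i ∈ Finset.univ.erase (P J), (lam (J.1 (P J))) ^ (-δ) := by rw [step2]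
        _ ≤ D * ∏ i ∈ Finset.univ.erase (P J), (lam (J.1 i)) ^ (-δ) :=
            mul_le_mul_of_nonneg_left step3 hD0.le
    have hsubty : ∏ i : {i : Fin n // i ≠ P J}, w (J.1 i.1)
        = ∏ i ∈ Finset.univ.erase (P J), w (J.1 i) :=
      (Finset.prod_subtype (Finset.univ.erase (P J))
        (fun x => by simp [Finset.mem_erase]) (fun i => w (J.1 i))).symm
    calc ∏ i : Fin n, ‖r (J.1 i)‖
        = ‖r (J.1 (P J))‖ * ∏ i ∈ Finset.univ.erase (P J), ‖r (J.1 i)‖ :=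
          (Finset.mul_prod_erase Finset.univ _ (Finset.mem_univ (P J))).symm
      _ ≤ (D * ∏ i ∈ Finset.univ.erase (P J), (lam (J.1 i)) ^ (-δ))
            * ∏ i ∈ Finset.univ.erase (P J), ‖r (J.1 i)‖ :=
          mul_le_mul_of_nonneg_right hkey
            (Finset.prod_nonneg fun i _ => norm_nonneg _)
      _ = D * ∏ i ∈ Finset.univ.erase (P J), w (J.1 i) := by
          rw [mul_assoc, ← Finset.prod_mul_distrib]
          congr 1
          apply Finset.prod_congr rfl
          intro i _
          rw [hwdef]
          ring
      _ = D * ∏ i : {i : Fin n // i ≠ P J}, w (J.1 i.1) := by rw [hsubty]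
  have t1 := hgs.comp_injective hΦinj
  refine Summable.of_nonneg_of_le (f := fun J => g (Φ J))
    (fun J => Finset.prod_nonneg fun i _ => norm_nonneg _)
    (fun J => hdom J) t1
end

section
/- For $R>0$ define $h_R(t)=2^{3/2}\int_{-R}^R(\cosh R-\cosh u)^{1/2}e^{itu}\,du$. Then $h_R(i/2)=2\pi(\cosh R-1)$. -/
open Filter Topology

open intervalIntegral Real in
/-- Integral of an odd function over a symmetric interval vanishes. -/
lemma odd_integral_zero {R : ℝ} {f : ℝ → ℝ} (hf : ∀ x, f (-x) = -f x) :
    ∫ x in -R..R, f x = 0 := by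
  have h := intervalIntegral.integral_comp_neg (a := -R) (b := R) f
  rw [neg_neg] at h
  simp only [hf, intervalIntegral.integral_neg] at h
  linarith

/-- The evaluation `h_R(i/2) = 2π(cosh R - 1)`:
`2^{3/2} ∫_{-R}^R (cosh R - cosh u)^{1/2} e^{-u/2} du = 2π (cosh R - 1)`. -/
theorem stmt15 (R : ℝ) (hR : 0 < R) :
    (2:ℝ) ^ ((3:ℝ) / 2) *
      ∫ u in -R..R, Real.sqrt (Real.cosh R - Real.cosh u) * Real.exp (-u / 2)
    = 2 * Real.pi * (Real.cosh R - 1) := by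
  set a := Real.sinh (R / 2) with ha
  have ha0 : 0 < a := Real.sinh_pos_iff.2 (by linarith)
  -- identity: cosh u = 2 sinh(u/2)^2 + 1
  have hcosh : ∀ u : ℝ, Real.cosh u = 2 * Real.sinh (u / 2) ^ 2 + 1 := by
    intro u
    have := Real.cosh_two_mul (u / 2)
    have h2 : 2 * (u / 2) = u := by ring
    rw [h2] at this
    rw [this, Real.cosh_sq]
    ring
  -- Step 1: reduce exp(-u/2) to cosh(u/2) by oddness
  have hcont1 : Continuous fun u : ℝ =>
      Real.sqrt (Real.cosh R - Real.cosh u) * Real.cosh (u / 2) :=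
    ((continuous_const.sub Real.continuous_cosh).sqrt).mul
      (Real.continuous_cosh.comp (continuous_id.div_const 2))
  have hcont2 : Continuous fun u : ℝ =>
      Real.sqrt (Real.cosh R - Real.cosh u) * Real.sinh (u / 2) :=
    ((continuous_const.sub Real.continuous_cosh).sqrt).mul
      (Real.continuous_sinh.comp (continuous_id.div_const 2))
  have step1 :
      (∫ u in -R..R, Real.sqrt (Real.cosh R - Real.cosh u) * Real.exp (-u / 2))
        = ∫ u in -R..R, Real.sqrt (Real.cosh R - Real.cosh u) * Real.cosh (u / 2) := by
    have heq : ∀ u : ℝ, Real.sqrt (Real.cosh R - Real.cosh u) * Real.exp (-u / 2)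
        = Real.sqrt (Real.cosh R - Real.cosh u) * Real.cosh (u / 2)
          - Real.sqrt (Real.cosh R - Real.cosh u) * Real.sinh (u / 2) := by
      intro u
      have : Real.exp (-u / 2) = Real.cosh (u / 2) - Real.sinh (u / 2) := by
        rw [Real.cosh_eq, Real.sinh_eq]
        rw [show -u / 2 = -(u / 2) by ring]
        ring
      rw [this]; ring
    simp only [heq]
    rw [intervalIntegral.integral_sub (hcont1.intervalIntegrable _ _)
      (hcont2.intervalIntegrable _ _)]
    have hodd : (∫ u in -R..R,
        Real.sqrt (Real.cosh R - Real.cosh u) * Real.sinh (u / 2)) = 0 := by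
      apply odd_integral_zero
      intro x
      rw [Real.cosh_neg, show -x / 2 = -(x / 2) by ring, Real.sinh_neg]
      ring
    rw [hodd]; ring
  -- Step 2: substitution s = sinh(u/2)
  have step2 :
      (∫ u in -R..R, Real.sqrt (Real.cosh R - Real.cosh u) * Real.cosh (u / 2))
        = ∫ s in -a..a, 2 * Real.sqrt 2 * Real.sqrt (a ^ 2 - s ^ 2) := by
    have key := intervalIntegral.integral_comp_smul_deriv
      (a := -R) (b := R)
      (f := fun u => Real.sinh (u / 2)) (f' := fun u => Real.cosh (u / 2) / 2)
      (g := fun s => 2 * Real.sqrt 2 * Real.sqrt (a ^ 2 - s ^ 2))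
      (fun x _ => by
        have : HasDerivAt (fun u : ℝ => Real.sinh (u / 2))
            (Real.cosh (x / 2) * (1 / 2)) x := by
          exact (Real.hasDerivAt_sinh (x / 2)).comp x
            ((hasDerivAt_id x).div_const 2)
        rwa [mul_one_div] at this)
      ((Real.continuous_cosh.comp (continuous_id.div_const 2)).div_const 2).continuousOn
      (by continuity)
    simp only [Function.comp, neg_div, Real.sinh_neg] at key
    rw [← key]
    apply intervalIntegral.integral_congr
    intro u _
    simp only [Function.comp, smul_eq_mul]
    have h1 : Real.cosh R - Real.cosh u
        = 2 * (a ^ 2 - Real.sinh (u / 2) ^ 2) := by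
      rw [hcosh R, hcosh u]; ring
    rw [h1, Real.sqrt_mul (by norm_num : (0:ℝ) ≤ 2)]
    ring
  -- Step 3: ∫ s in -a..a, √(a² - s²) = π a² / 2
  have step3 : (∫ s in -a..a, Real.sqrt (a ^ 2 - s ^ 2)) = Real.pi * a ^ 2 / 2 := by
    have key := intervalIntegral.integral_comp_smul_deriv
      (a := (-1:ℝ)) (b := 1)
      (f := fun x => a * x) (f' := fun _ => a)
      (g := fun s => Real.sqrt (a ^ 2 - s ^ 2))
      (fun x _ => by simpa using (hasDerivAt_id x).const_mul a)
      continuousOn_const (by continuity)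
    simp only [mul_neg_one, mul_one] at key
    rw [← key]
    have heq : ∀ x : ℝ, (fun x => a • (fun s => Real.sqrt (a ^ 2 - s ^ 2)) (a * x)) x
        = a ^ 2 * Real.sqrt (1 - x ^ 2) := by
      intro x
      simp only [smul_eq_mul]
      have : a ^ 2 - (a * x) ^ 2 = a ^ 2 * (1 - x ^ 2) := by ring
      rw [this, Real.sqrt_mul (sq_nonneg a), Real.sqrt_sq ha0.le]
      ring
    calc (∫ x in (-1:ℝ)..1, a • (fun s => Real.sqrt (a ^ 2 - s ^ 2)) (a * x))
        = ∫ x in (-1:ℝ)..1, a ^ 2 * Real.sqrt (1 - x ^ 2) := by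
          exact intervalIntegral.integral_congr fun x _ => heq x
      _ = a ^ 2 * ∫ x in (-1:ℝ)..1, Real.sqrt (1 - x ^ 2) := by
          rw [intervalIntegral.integral_const_mul]
      _ = Real.pi * a ^ 2 / 2 := by rw [integral_sqrt_one_sub_sq]; ring
  rw [step1, step2, intervalIntegral.integral_const_mul, step3]
  have hpow : (2:ℝ) ^ ((3:ℝ) / 2) * (2 * Real.sqrt 2) = 8 := by
    rw [Real.sqrt_eq_rpow]
    rw [show (2:ℝ) ^ ((3:ℝ)/2) * (2 * (2:ℝ) ^ ((1:ℝ)/2))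
        = 2 * ((2:ℝ) ^ ((3:ℝ)/2) * (2:ℝ) ^ ((1:ℝ)/2)) by ring]
    rw [← Real.rpow_add (by norm_num)]
    norm_num
  have hcR : Real.cosh R - 1 = 2 * a ^ 2 := by rw [hcosh R]; ring
  rw [hcR]
  linear_combination (Real.pi * a ^ 2 / 2) * hpow
end
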